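/- arXiv:2401.09191 — 5 statements merged into one kernel-verified Lean document; each statement's English description precedes it below -/
import Mathlib

section
/- Let 1 ≤ L ≤ K and suppose the family (λ*_A, μ*_{i,A})_{A∈S_K, i∈A} attains the infimum of the untruncated generalized barycenter problem V(K). Then the truncated value satisfies V(L) − V(K) ≤ Σ_{k=L+1}^{K} (k/L − 1) · Σ_{A∈S_K, |A|=k} λ*_A(ℝ^p). -/
open MeasureTheory
open scoped ENNReal BigOperators

noncomputable section

/-- The cost `c_ε(x, x') = 0` if `‖x − x'‖ ≤ ε` and `+∞` otherwise. -/
def ceps {E : Type*} [NormedAddCommGroup E] (ε : ℝ) (x y : E) : ℝ≥0∞ :=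
  if ‖x - y‖ ≤ ε then 0 else ⊤

/-- The optimal transport cost `C_ε(ρ, σ)` associated to the cost `c_ε`
(`+∞` if no coupling of `ρ` and `σ` exists). -/
def Ceps {E : Type*} [NormedAddCommGroup E] [MeasurableSpace E] (ε : ℝ)
    (ρ σ : Measure E) : ℝ≥0∞ :=
  sInf {v : ℝ≥0∞ | ∃ π : Measure (E × E),
    π.map Prod.fst = ρ ∧ π.map Prod.snd = σ ∧ v = ∫⁻ z, ceps ε z.1 z.2 ∂π}

/-- The collection of nonempty subsets of `{1, …, K}`. -/
def SK (K : ℕ) : Finset (Finset (Fin K)) := Finset.univ.filter fun A => A.Nonempty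

/-- The value `V(L)` of the level-`L` truncated generalized barycenter problem. -/
def Vval {E : Type*} [NormedAddCommGroup E] [MeasurableSpace E] (ε : ℝ) (K L : ℕ)
    (μ : Fin K → Measure E) : ℝ≥0∞ :=
  sInf {v : ℝ≥0∞ |
    ∃ (lam : Finset (Fin K) → Measure E) (m : Fin K → Finset (Fin K) → Measure E),
      (∀ A, IsFiniteMeasure (lam A)) ∧ (∀ i A, IsFiniteMeasure (m i A)) ∧
      (∀ A : Finset (Fin K), L < A.card → lam A = 0) ∧
      (∀ (i : Fin K) (A : Finset (Fin K)), L < A.card → m i A = 0) ∧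
      (∀ i : Fin K, ∑ A ∈ (SK K).filter (fun A => i ∈ A), m i A = μ i) ∧
      v = ∑ A ∈ SK K, (lam A Set.univ + ∑ i ∈ A, Ceps ε (lam A) (m i A))}

lemma map_finset_sum_aux {α β ι : Type*} [MeasurableSpace α] [MeasurableSpace β]
    {f : α → β} (hf : Measurable f) (s : Finset ι) (ν : ι → Measure α) :
    (∑ j ∈ s, ν j).map f = ∑ j ∈ s, (ν j).map f := by
  induction s using Finset.cons_induction with
  | empty => simp
  | cons a s ha ih => rw [Finset.sum_cons, Finset.sum_cons, Measure.map_add _ _ hf, ih]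

lemma exists_zero_coupling {E : Type*} [NormedAddCommGroup E] [NormedSpace ℝ E]
    [FiniteDimensional ℝ E] [MeasurableSpace E] [BorelSpace E] (ε : ℝ)
    {ρ σ : Measure E} (h : Ceps ε ρ σ ≠ ⊤) :
    ∃ π : Measure (E × E), π.map Prod.fst = ρ ∧ π.map Prod.snd = σ ∧
      ∫⁻ z, ceps ε z.1 z.2 ∂π = 0 := by
  rw [Ceps, ne_eq, sInf_eq_top] at h
  push_neg at h
  obtain ⟨v, ⟨π, h1, h2, h3⟩, hv⟩ := h
  refine ⟨π, h1, h2, ?_⟩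
  have hs : MeasurableSet {z : E × E | ¬ ‖z.1 - z.2‖ ≤ ε} := by
    have : Continuous fun z : E × E => ‖z.1 - z.2‖ := (continuous_fst.sub continuous_snd).norm
    exact (measurableSet_le this.measurable measurable_const).compl
  have key : ∫⁻ z, ceps ε z.1 z.2 ∂π = ⊤ * π {z : E × E | ¬ ‖z.1 - z.2‖ ≤ ε} := by
    rw [← lintegral_indicator_const hs ⊤]
    congr 1; funext z
    by_cases hz : ‖z.1 - z.2‖ ≤ ε
    · simp [ceps, hz, Set.indicator, not_lt.2 hz]
    · simp [ceps, hz, Set.indicator, not_le.1 hz]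
  have hv' : ⊤ * π {z : E × E | ¬ ‖z.1 - z.2‖ ≤ ε} ≠ ⊤ := by rw [← key, ← h3]; exact hv
  rw [key]
  rcases eq_or_ne (π {z : E × E | ¬ ‖z.1 - z.2‖ ≤ ε}) 0 with h0 | h0
  · rw [h0, mul_zero]
  · exact absurd (ENNReal.top_mul h0) hv'

lemma Ceps_combo {E : Type*} [NormedAddCommGroup E] [MeasurableSpace E] (ε : ℝ)
    {ι : Type*} (s : Finset ι) (w : ι → ℝ≥0∞) (ρ σ : ι → Measure E)
    (h : ∀ j ∈ s, w j ≠ 0 → ∃ π : Measure (E × E), π.map Prod.fst = ρ j ∧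
      π.map Prod.snd = σ j ∧ ∫⁻ z, ceps ε z.1 z.2 ∂π = 0) :
    Ceps ε (∑ j ∈ s, w j • ρ j) (∑ j ∈ s, w j • σ j) = 0 := by
  classical
  refine le_antisymm ?_ (zero_le)
  set pick : ι → Measure (E × E) := fun j =>
    if hj : j ∈ s ∧ w j ≠ 0 then (h j hj.1 hj.2).choose else 0 with hpick
  have hpick' : ∀ j (hj : j ∈ s) (hw : w j ≠ 0), pick j = (h j hj hw).choose := by
    intro j hj hw
    rw [hpick]
    exact dif_pos ⟨hj, hw⟩
  have hfst : ∀ j ∈ s, (w j • pick j).map Prod.fst = w j • ρ j := by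
    intro j hj
    rcases eq_or_ne (w j) 0 with hw | hw
    · simp [hw]
    · have hspec := (h j hj hw).choose_spec
      rw [hpick' j hj hw, Measure.map_smul, hspec.1]
  have hsnd : ∀ j ∈ s, (w j • pick j).map Prod.snd = w j • σ j := by
    intro j hj
    rcases eq_or_ne (w j) 0 with hw | hw
    · simp [hw]
    · have hspec := (h j hj hw).choose_spec
      rw [hpick' j hj hw, Measure.map_smul, hspec.2.1]
  apply sInf_le
  refine ⟨∑ j ∈ s, w j • pick j, ?_, ?_, ?_⟩
  · rw [map_finset_sum_aux measurable_fst]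
    exact Finset.sum_congr rfl hfst
  · rw [map_finset_sum_aux measurable_snd]
    exact Finset.sum_congr rfl hsnd
  · rw [lintegral_finset_sum_measure]
    symm
    apply Finset.sum_eq_zero
    intro j hj
    rcases eq_or_ne (w j) 0 with hw | hw
    · simp [hw]
    · have hspec := (h j hj hw).choose_spec
      rw [lintegral_smul_measure, hpick' j hj hw, hspec.2.2, smul_zero]

/-- if `(λ*_A, μ*_{i,A})` attains the untruncated generalized barycenter
value `V(K)`, then for `1 ≤ L ≤ K`,
`V(L) − V(K) ≤ Σ_{k=L+1}^K (k/L − 1) Σ_{|A|=k} λ*_A(ℝ^p)`. -/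
theorem stmt0 {E : Type*} [NormedAddCommGroup E] [NormedSpace ℝ E]
    [FiniteDimensional ℝ E] [MeasurableSpace E] [BorelSpace E]
    (ε : ℝ) (hε : 0 < ε) (K L : ℕ) (hL : 1 ≤ L) (hLK : L ≤ K)
    (μ : Fin K → Measure E) (hμ : ∀ i, IsFiniteMeasure (μ i))
    (lamS : Finset (Fin K) → Measure E) (mS : Fin K → Finset (Fin K) → Measure E)
    (hlamfin : ∀ A, IsFiniteMeasure (lamS A))
    (hmfin : ∀ i A, IsFiniteMeasure (mS i A))
    (hfeas : ∀ i : Fin K, ∑ A ∈ (SK K).filter (fun A => i ∈ A), mS i A = μ i)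
    (hopt : ∑ A ∈ SK K, (lamS A Set.univ + ∑ i ∈ A, Ceps ε (lamS A) (mS i A))
      = Vval ε K K μ) :
    Vval ε K L μ - Vval ε K K μ ≤
      ∑ k ∈ Finset.Icc (L + 1) K,
        ((k : ℝ≥0∞) / (L : ℝ≥0∞) - 1) *
          ∑ A ∈ (SK K).filter (fun A => A.card = k), lamS A Set.univ := by
  classical
  by_cases htop : Vval ε K K μ = ⊤
  · rw [htop, tsub_eq_zero_of_le le_top]; exact zero_le
  rw [tsub_le_iff_right]
  have hsum_ne : (∑ A ∈ SK K, (lamS A Set.univ + ∑ i ∈ A, Ceps ε (lamS A) (mS i A))) ≠ ⊤ := by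
    rw [hopt]; exact htop
  have hCne : ∀ A ∈ SK K, ∀ i ∈ A, Ceps ε (lamS A) (mS i A) ≠ ⊤ := by
    intro A hA i hi hTop
    apply hsum_ne
    refine ENNReal.sum_eq_top.2 ⟨A, hA, ?_⟩
    rw [ENNReal.add_eq_top]
    exact Or.inr (ENNReal.sum_eq_top.2 ⟨i, hi, hTop⟩)
  have hC0 : ∀ A ∈ SK K, ∀ i ∈ A, Ceps ε (lamS A) (mS i A) = 0 := by
    intro A hA i hi
    obtain ⟨π, h1, h2, h3⟩ := exists_zero_coupling ε (hCne A hA i hi)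
    exact le_antisymm (sInf_le ⟨π, h1, h2, h3.symm⟩) (zero_le)
  have hVK : Vval ε K K μ = ∑ A ∈ SK K, lamS A Set.univ := by
    rw [← hopt]
    refine Finset.sum_congr rfl fun A hA => ?_
    rw [Finset.sum_eq_zero (hC0 A hA), add_zero]
  -- weights
  set c : ℕ → ℝ≥0∞ := fun k => ((Nat.choose (k-1) (L-1) : ℕ) : ℝ≥0∞)⁻¹ with hc
  set coef : Finset (Fin K) → Finset (Fin K) → ℝ≥0∞ := fun B A =>
    if A.card ≤ L then (if A = B then 1 else 0)
    else (if B ⊆ A ∧ B.card = L then c A.card else 0) with hcoef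
  have hchoose_pos : ∀ A : Finset (Fin K), L < A.card → 0 < Nat.choose (A.card - 1) (L-1) :=
    fun A hA => Nat.choose_pos (Nat.sub_le_sub_right hA.le 1)
  have hcoef_ne_top : ∀ B A : Finset (Fin K), coef B A ≠ ⊤ := by
    intro B A
    simp only [hcoef]
    split_ifs with h1 h2 h3
    · exact ENNReal.one_ne_top
    · exact ENNReal.zero_ne_top
    · exact ENNReal.inv_ne_top.2 (by exact_mod_cast (hchoose_pos A (not_le.1 h1)).ne')
    · exact ENNReal.zero_ne_top
  set lam' : Finset (Fin K) → Measure E := fun B => ∑ A ∈ SK K, coef B A • lamS A with hlam'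
  set m' : Fin K → Finset (Fin K) → Measure E :=
    fun i B => ∑ A ∈ SK K, coef B A • mS i A with hm'
  have hmass : ∀ B, lam' B Set.univ = ∑ A ∈ SK K, coef B A * lamS A Set.univ := by
    intro B
    simp only [hlam']
    rw [Measure.finset_sum_apply]
    exact Finset.sum_congr rfl fun A _ => by rw [Measure.smul_apply, smul_eq_mul]
  have hmmass : ∀ i B, m' i B Set.univ = ∑ A ∈ SK K, coef B A * mS i A Set.univ := by
    intro i B
    simp only [hm']
    rw [Measure.finset_sum_apply]
    exact Finset.sum_congr rfl fun A _ => by rw [Measure.smul_apply, smul_eq_mul]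
  have hlamfin' : ∀ B, IsFiniteMeasure (lam' B) := by
    intro B
    constructor
    rw [hmass]
    refine ENNReal.sum_lt_top.2 fun A _ => ENNReal.mul_lt_top ?_ (measure_lt_top _ _)
    exact lt_top_iff_ne_top.2 (hcoef_ne_top B A)
  have hmfin' : ∀ i B, IsFiniteMeasure (m' i B) := by
    intro i B
    constructor
    rw [hmmass]
    refine ENNReal.sum_lt_top.2 fun A _ => ENNReal.mul_lt_top ?_ (measure_lt_top _ _)
    exact lt_top_iff_ne_top.2 (hcoef_ne_top B A)
  have hcoef_zero_of_big : ∀ B A : Finset (Fin K), L < B.card → coef B A = 0 := by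
    intro B A hB
    simp only [hcoef]
    split_ifs with h1 h2 h3
    · exact absurd h1 (by rw [h2]; exact not_le.2 hB)
    · rfl
    · exact absurd h3.2 (by omega)
    · rfl
  have htrunc_lam : ∀ B : Finset (Fin K), L < B.card → lam' B = 0 := by
    intro B hB
    simp only [hlam']
    exact Finset.sum_eq_zero fun A _ => by rw [hcoef_zero_of_big B A hB, zero_smul]
  have htrunc_m : ∀ (i : Fin K) (B : Finset (Fin K)), L < B.card → m' i B = 0 := by
    intro i B hB
    simp only [hm']
    exact Finset.sum_eq_zero fun A _ => by rw [hcoef_zero_of_big B A hB, zero_smul]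
  have hcount : ∀ (A : Finset (Fin K)) (i : Fin K), i ∈ A → L < A.card →
      ((((SK K).filter (fun B => i ∈ B)).filter (fun B => B ⊆ A ∧ B.card = L)).card : ℕ)
        = Nat.choose (A.card - 1) (L - 1) := by
    intro A i hiA hcard
    have hpc : ((A.erase i).powersetCard (L-1)).card = Nat.choose (A.card - 1) (L-1) := by
      rw [Finset.card_powersetCard, Finset.card_erase_of_mem hiA]
    rw [← hpc]
    refine Finset.card_bij' (fun B _ => B.erase i) (fun C _ => insert i C) ?_ ?_ ?_ ?_
    · intro B hB
      simp only [Finset.mem_filter, SK, Finset.mem_univ, true_and] at hB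
      obtain ⟨⟨_, hiB⟩, hBA, hBL⟩ := hB
      rw [Finset.mem_powersetCard]
      exact ⟨Finset.erase_subset_erase i hBA, by rw [Finset.card_erase_of_mem hiB, hBL]⟩
    · intro C hC
      rw [Finset.mem_powersetCard] at hC
      obtain ⟨hCsub, hCcard⟩ := hC
      have hiC : i ∉ C := fun h => Finset.notMem_erase i A (hCsub h)
      simp only [Finset.mem_filter, SK, Finset.mem_univ, true_and]
      refine ⟨⟨⟨i, Finset.mem_insert_self i C⟩, Finset.mem_insert_self i C⟩, ?_, ?_⟩
      · exact Finset.insert_subset hiA (hCsub.trans (Finset.erase_subset i A))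
      · rw [Finset.card_insert_of_notMem hiC, hCcard]; omega
    · intro B hB
      simp only [Finset.mem_filter, SK, Finset.mem_univ, true_and] at hB
      exact Finset.insert_erase hB.1.2
    · intro C hC
      rw [Finset.mem_powersetCard] at hC
      have hiC : i ∉ C := fun h => Finset.notMem_erase i A (hC.1 h)
      exact Finset.erase_insert hiC
  have hkey : ∀ (i : Fin K), ∀ A ∈ SK K,
      (∑ B ∈ (SK K).filter (fun B => i ∈ B), coef B A)
        = if i ∈ A then (1:ℝ≥0∞) else 0 := by
    intro i A hA
    by_cases hiA : i ∈ A
    · rw [if_pos hiA]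
      by_cases hcard : A.card ≤ L
      · have hco : ∀ B, coef B A = if A = B then (1:ℝ≥0∞) else 0 := fun B => by
          simp only [hcoef]; rw [if_pos hcard]
        simp_rw [hco]
        rw [Finset.sum_ite_eq, if_pos (Finset.mem_filter.2 ⟨hA, hiA⟩)]
      · push_neg at hcard
        have hco : ∀ B, coef B A = if B ⊆ A ∧ B.card = L then c A.card else 0 := fun B => by
          simp only [hcoef]; rw [if_neg (not_le.2 hcard)]
        simp_rw [hco]
        rw [Finset.sum_ite, Finset.sum_const_zero, add_zero, Finset.sum_const,
          hcount A i hiA hcard, nsmul_eq_mul, hc]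
        exact ENNReal.mul_inv_cancel
          (Nat.cast_ne_zero.2 (hchoose_pos A hcard).ne') (ENNReal.natCast_ne_top _)
    · rw [if_neg hiA]
      refine Finset.sum_eq_zero fun B hB => ?_
      obtain ⟨hBSK, hiB⟩ := Finset.mem_filter.1 hB
      simp only [hcoef]
      split_ifs with h1 h2 h3
      · rw [h2] at hiA; exact absurd hiB hiA
      · rfl
      · exact absurd (h3.1 hiB) hiA
      · rfl
  have hfeas' : ∀ i : Fin K, ∑ B ∈ (SK K).filter (fun B => i ∈ B), m' i B = μ i := by
    intro i
    rw [← hfeas i]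
    calc ∑ B ∈ (SK K).filter (fun B => i ∈ B), m' i B
        = ∑ B ∈ (SK K).filter (fun B => i ∈ B), ∑ A ∈ SK K, coef B A • mS i A := by
          simp only [hm']
      _ = ∑ A ∈ SK K, ∑ B ∈ (SK K).filter (fun B => i ∈ B), coef B A • mS i A :=
          Finset.sum_comm
      _ = ∑ A ∈ SK K, (∑ B ∈ (SK K).filter (fun B => i ∈ B), coef B A) • mS i A := by
          exact Finset.sum_congr rfl fun A _ => by rw [Finset.sum_smul]
      _ = ∑ A ∈ SK K, (if i ∈ A then (1:ℝ≥0∞) else 0) • mS i A := by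
          exact Finset.sum_congr rfl fun A hA => by rw [hkey i A hA]
      _ = ∑ A ∈ (SK K).filter (fun A => i ∈ A), mS i A := by
          rw [Finset.sum_filter]
          refine Finset.sum_congr rfl fun A _ => ?_
          split_ifs with h
          · rw [one_smul]
          · rw [zero_smul]
  have hcost0 : ∀ B ∈ SK K, ∀ i ∈ B, Ceps ε (lam' B) (m' i B) = 0 := by
    intro B hB i hiB
    simp only [hlam', hm']
    apply Ceps_combo
    intro A hA hcoefne
    have hiA : i ∈ A := by
      simp only [hcoef] at hcoefne
      by_cases hcard : A.card ≤ L
      · rw [if_pos hcard] at hcoefne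
        by_cases hAB : A = B
        · rw [hAB]; exact hiB
        · rw [if_neg hAB] at hcoefne; exact absurd rfl hcoefne
      · rw [if_neg hcard] at hcoefne
        by_cases hsub : B ⊆ A ∧ B.card = L
        · exact hsub.1 hiB
        · rw [if_neg hsub] at hcoefne; exact absurd rfl hcoefne
    exact exists_zero_coupling ε (hCne A hA i hiA)
  have hub : Vval ε K L μ ≤ ∑ B ∈ SK K, lam' B Set.univ := by
    have hmem : (∑ B ∈ SK K, (lam' B Set.univ + ∑ i ∈ B, Ceps ε (lam' B) (m' i B))) ∈
        {v : ℝ≥0∞ |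
          ∃ (lam : Finset (Fin K) → Measure E) (m : Fin K → Finset (Fin K) → Measure E),
            (∀ A, IsFiniteMeasure (lam A)) ∧ (∀ i A, IsFiniteMeasure (m i A)) ∧
            (∀ A : Finset (Fin K), L < A.card → lam A = 0) ∧
            (∀ (i : Fin K) (A : Finset (Fin K)), L < A.card → m i A = 0) ∧
            (∀ i : Fin K, ∑ A ∈ (SK K).filter (fun A => i ∈ A), m i A = μ i) ∧
            v = ∑ A ∈ SK K, (lam A Set.univ + ∑ i ∈ A, Ceps ε (lam A) (m i A))} :=
      ⟨lam', m', hlamfin', hmfin', htrunc_lam, htrunc_m, hfeas', rfl⟩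
    calc Vval ε K L μ
        ≤ ∑ B ∈ SK K, (lam' B Set.univ + ∑ i ∈ B, Ceps ε (lam' B) (m' i B)) := sInf_le hmem
      _ = ∑ B ∈ SK K, lam' B Set.univ := Finset.sum_congr rfl fun B hB => by
          rw [Finset.sum_eq_zero (hcost0 B hB), add_zero]
  have hT : ∑ B ∈ SK K, lam' B Set.univ
      = ∑ A ∈ SK K, (∑ B ∈ SK K, coef B A) * lamS A Set.univ := by
    simp_rw [hmass]
    rw [Finset.sum_comm]
    exact Finset.sum_congr rfl fun A _ => by rw [Finset.sum_mul]
  have hsA : ∀ A ∈ SK K, (∑ B ∈ SK K, coef B A)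
      = if A.card ≤ L then (1:ℝ≥0∞) else (A.card : ℝ≥0∞) / (L:ℝ≥0∞) := by
    intro A hA
    by_cases hcard : A.card ≤ L
    · rw [if_pos hcard]
      have hco : ∀ B, coef B A = if A = B then (1:ℝ≥0∞) else 0 := fun B => by
        simp only [hcoef]; rw [if_pos hcard]
      simp_rw [hco]
      rw [Finset.sum_ite_eq, if_pos hA]
    · rw [if_neg hcard]; push_neg at hcard
      have hco : ∀ B, coef B A = if B ⊆ A ∧ B.card = L then c A.card else 0 := fun B => by
        simp only [hcoef]; rw [if_neg (not_le.2 hcard)]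
      simp_rw [hco]
      rw [Finset.sum_ite, Finset.sum_const_zero, add_zero, Finset.sum_const]
      have hfilt : (SK K).filter (fun B => B ⊆ A ∧ B.card = L) = A.powersetCard L := by
        ext B
        simp only [Finset.mem_filter, Finset.mem_powersetCard, SK, Finset.mem_univ, true_and]
        constructor
        · rintro ⟨_, h1, h2⟩; exact ⟨h1, h2⟩
        · rintro ⟨h1, h2⟩
          refine ⟨?_, h1, h2⟩
          rw [← Finset.card_pos, h2]; omega
      rw [hfilt, Finset.card_powersetCard, nsmul_eq_mul, hc]
      have hnat : A.card * Nat.choose (A.card - 1) (L - 1) = Nat.choose A.card L * L := by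
        have h := Nat.add_one_mul_choose_eq (A.card - 1) (L - 1)
        have e1 : A.card - 1 + 1 = A.card := by omega
        have e2 : L - 1 + 1 = L := by omega
        rw [e1, e2] at h
        exact h
      have hb0 : ((Nat.choose (A.card - 1) (L-1) : ℕ) : ℝ≥0∞) ≠ 0 :=
        Nat.cast_ne_zero.2 (hchoose_pos A hcard).ne'
      have hbtop : ((Nat.choose (A.card - 1) (L-1) : ℕ) : ℝ≥0∞) ≠ ⊤ := ENNReal.natCast_ne_top _
      have hL0 : ((L:ℕ) : ℝ≥0∞) ≠ 0 := Nat.cast_ne_zero.2 (by omega)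
      have hLtop : ((L:ℕ) : ℝ≥0∞) ≠ ⊤ := ENNReal.natCast_ne_top _
      have hcast : (Nat.choose A.card L : ℝ≥0∞) * (L : ℝ≥0∞)
          = (A.card : ℝ≥0∞) * ((Nat.choose (A.card - 1) (L-1) : ℕ) : ℝ≥0∞) := by
        exact_mod_cast congrArg (Nat.cast : ℕ → ℝ≥0∞) hnat.symm
      calc (Nat.choose A.card L : ℝ≥0∞) * ((Nat.choose (A.card-1) (L-1) : ℕ) : ℝ≥0∞)⁻¹
          = (Nat.choose A.card L : ℝ≥0∞) * ((L:ℝ≥0∞) * (L:ℝ≥0∞)⁻¹)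
            * ((Nat.choose (A.card-1) (L-1) : ℕ) : ℝ≥0∞)⁻¹ := by
            rw [ENNReal.mul_inv_cancel hL0 hLtop, mul_one]
        _ = ((Nat.choose A.card L : ℝ≥0∞) * (L:ℝ≥0∞)) * (L:ℝ≥0∞)⁻¹
            * ((Nat.choose (A.card-1) (L-1) : ℕ) : ℝ≥0∞)⁻¹ := by ring
        _ = ((A.card : ℝ≥0∞) * ((Nat.choose (A.card-1) (L-1) : ℕ) : ℝ≥0∞)) * (L:ℝ≥0∞)⁻¹
            * ((Nat.choose (A.card-1) (L-1) : ℕ) : ℝ≥0∞)⁻¹ := by rw [hcast]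
        _ = (A.card : ℝ≥0∞) * (((Nat.choose (A.card-1) (L-1) : ℕ) : ℝ≥0∞)
            * ((Nat.choose (A.card-1) (L-1) : ℕ) : ℝ≥0∞)⁻¹) * (L:ℝ≥0∞)⁻¹ := by ring
        _ = (A.card : ℝ≥0∞) / (L:ℝ≥0∞) := by
            rw [ENNReal.mul_inv_cancel hb0 hbtop, mul_one, div_eq_mul_inv]
  have hTsplit : ∑ A ∈ SK K, (∑ B ∈ SK K, coef B A) * lamS A Set.univ
      = (∑ A ∈ (SK K).filter (fun A => A.card ≤ L), lamS A Set.univ)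
        + ∑ A ∈ (SK K).filter (fun A => ¬ A.card ≤ L),
            ((A.card:ℝ≥0∞)/(L:ℝ≥0∞)) * lamS A Set.univ := by
    rw [← Finset.sum_filter_add_sum_filter_not (SK K) (fun A => A.card ≤ L)]
    congr 1
    · refine Finset.sum_congr rfl fun A hA => ?_
      obtain ⟨hASK, hP⟩ := Finset.mem_filter.1 hA
      rw [hsA A hASK, if_pos hP, one_mul]
    · refine Finset.sum_congr rfl fun A hA => ?_
      obtain ⟨hASK, hP⟩ := Finset.mem_filter.1 hA
      rw [hsA A hASK, if_neg hP]
  have hfilt2 : (SK K).filter (fun A => A.card ∈ Finset.Icc (L+1) K)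
      = (SK K).filter (fun A => ¬ A.card ≤ L) := by
    ext A
    simp only [Finset.mem_filter, Finset.mem_Icc, SK, Finset.mem_univ, true_and]
    constructor
    · rintro ⟨h1, h2, h3⟩; exact ⟨h1, by omega⟩
    · rintro ⟨h1, h2⟩
      have hcardle : A.card ≤ K := by
        have := Finset.card_le_univ A
        simpa using this
      exact ⟨h1, by omega, hcardle⟩
  have hR : ∑ k ∈ Finset.Icc (L + 1) K,
        ((k : ℝ≥0∞) / (L : ℝ≥0∞) - 1) *
          ∑ A ∈ (SK K).filter (fun A => A.card = k), lamS A Set.univ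
      = ∑ A ∈ (SK K).filter (fun A => ¬ A.card ≤ L),
          ((A.card:ℝ≥0∞)/(L:ℝ≥0∞) - 1) * lamS A Set.univ := by
    rw [← hfilt2, ← Finset.sum_fiberwise_eq_sum_filter (SK K) (Finset.Icc (L+1) K)
      (fun A => A.card) (fun A => ((A.card:ℝ≥0∞)/(L:ℝ≥0∞) - 1) * lamS A Set.univ)]
    refine Finset.sum_congr rfl fun k _ => ?_
    rw [Finset.mul_sum]
    refine Finset.sum_congr rfl fun A hA => ?_
    obtain ⟨_, hAk⟩ := Finset.mem_filter.1 hA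
    rw [hAk]
  calc Vval ε K L μ
      ≤ ∑ B ∈ SK K, lam' B Set.univ := hub
    _ = ∑ A ∈ SK K, (∑ B ∈ SK K, coef B A) * lamS A Set.univ := hT
    _ = (∑ A ∈ (SK K).filter (fun A => A.card ≤ L), lamS A Set.univ)
        + ∑ A ∈ (SK K).filter (fun A => ¬ A.card ≤ L),
            ((A.card:ℝ≥0∞)/(L:ℝ≥0∞)) * lamS A Set.univ := hTsplit
    _ ≤ (∑ A ∈ (SK K).filter (fun A => A.card ≤ L), lamS A Set.univ)
        + ∑ A ∈ (SK K).filter (fun A => ¬ A.card ≤ L),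
            (((A.card:ℝ≥0∞)/(L:ℝ≥0∞) - 1) * lamS A Set.univ + lamS A Set.univ) := by
        refine add_le_add le_rfl (Finset.sum_le_sum fun A _ => ?_)
        have h1 : (A.card:ℝ≥0∞)/(L:ℝ≥0∞) ≤ ((A.card:ℝ≥0∞)/(L:ℝ≥0∞) - 1) + 1 := le_tsub_add
        calc ((A.card:ℝ≥0∞)/(L:ℝ≥0∞)) * lamS A Set.univ
            ≤ (((A.card:ℝ≥0∞)/(L:ℝ≥0∞) - 1) + 1) * lamS A Set.univ :=
              mul_le_mul_left h1 _
          _ = ((A.card:ℝ≥0∞)/(L:ℝ≥0∞) - 1) * lamS A Set.univ + lamS A Set.univ := by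
              rw [add_mul, one_mul]
    _ = (∑ A ∈ (SK K).filter (fun A => ¬ A.card ≤ L),
            ((A.card:ℝ≥0∞)/(L:ℝ≥0∞) - 1) * lamS A Set.univ)
        + ((∑ A ∈ (SK K).filter (fun A => A.card ≤ L), lamS A Set.univ)
          + ∑ A ∈ (SK K).filter (fun A => ¬ A.card ≤ L), lamS A Set.univ) := by
        rw [Finset.sum_add_distrib]; ring
    _ = (∑ k ∈ Finset.Icc (L + 1) K,
          ((k : ℝ≥0∞) / (L : ℝ≥0∞) - 1) *
            ∑ A ∈ (SK K).filter (fun A => A.card = k), lamS A Set.univ)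
        + Vval ε K K μ := by
        rw [hR, hVK, Finset.sum_filter_add_sum_filter_not]

end
end

section
/- Let 1 ≤ L ≤ K and suppose the family (π*_A)_{A∈S_K} attains the infimum of the untruncated stratified multimarginal optimal transport problem M(K). Then the truncated value satisfies M(L) − M(K) ≤ Σ_{k=L+1}^{K} (k/L) · Σ_{A∈S_K, |A|=k} π*_A((ℝ^p)^A). -/
open MeasureTheory
open scoped ENNReal BigOperators

noncomputable section

/-- The cost tensor `c_{ε,A}(x_A) = inf_{x'} Σ_{i∈A} c_ε(x', x_i)`. -/
def cepsA {E : Type*} [NormedAddCommGroup E] (ε : ℝ) {K : ℕ}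
    (A : Finset (Fin K)) (x : (j : A) → E) : ℝ≥0∞ :=
  ⨅ x' : E, ∑ i : A, ceps ε x' (x i)

/-- Pushforward of a measure on `E^A` by the projection onto coordinate `i ∈ A`
(the zero measure when `i ∉ A`). -/
def projMarg {E : Type*} [MeasurableSpace E] {K : ℕ} (A : Finset (Fin K))
    (π : Measure ((j : A) → E)) (i : Fin K) : Measure E :=
  if hi : i ∈ A then π.map (fun x => x ⟨i, hi⟩) else 0

/-- The value `M(L)` of the level-`L` truncated stratified MOT problem. -/
def Mval {E : Type*} [NormedAddCommGroup E] [MeasurableSpace E] (ε : ℝ) (K L : ℕ)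
    (μ : Fin K → Measure E) : ℝ≥0∞ :=
  sInf {v : ℝ≥0∞ |
    ∃ π : (A : Finset (Fin K)) → Measure ((j : A) → E),
      (∀ i : Fin K,
        ∑ A ∈ (SK K).filter (fun A => A.card ≤ L ∧ i ∈ A), projMarg A (π A) i = μ i) ∧
      v = ∑ A ∈ (SK K).filter (fun A => A.card ≤ L),
            ∫⁻ x, (1 + cepsA ε A x) ∂(π A)}

section Helpers
set_option linter.unusedSectionVars false
variable {E : Type*} [NormedAddCommGroup E] [MeasurableSpace E] {K : ℕ}

/-- restriction map -/
def res {B A : Finset (Fin K)} (h : B ⊆ A) (x : (j : A) → E) : (j : B) → E :=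
  fun j => x ⟨j.1, h j.2⟩

lemma measurable_res {B A : Finset (Fin K)} (h : B ⊆ A) :
    Measurable (res (E := E) h) :=
  measurable_pi_lambda _ fun _ => measurable_pi_apply _

lemma cepsA_res_le (ε : ℝ) {B A : Finset (Fin K)} (h : B ⊆ A) (x : (j : A) → E) :
    cepsA ε B (res h x) ≤ cepsA ε A x := by
  refine iInf_mono fun x' => ?_
  set g : Fin K → ℝ≥0∞ := fun j => if hj : j ∈ A then ceps ε x' (x ⟨j, hj⟩) else 0 with hg
  have h1 : ∑ i : B, ceps ε x' (res h x i) = ∑ j ∈ B, g j := by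
    rw [← Finset.sum_coe_sort B g]
    refine Finset.sum_congr rfl fun i _ => ?_
    simp only [hg, dif_pos (h i.2)]
    rfl
  have h2 : ∑ i : A, ceps ε x' (x i) = ∑ j ∈ A, g j := by
    rw [← Finset.sum_coe_sort A g]
    refine Finset.sum_congr rfl fun i _ => ?_
    simp only [hg, dif_pos i.2]
  rw [h1, h2]
  exact Finset.sum_le_sum_of_subset h

lemma cepsA_zero_or_top (ε : ℝ) (A : Finset (Fin K)) (x : (j : A) → E) :
    cepsA ε A x = 0 ∨ cepsA ε A x = ⊤ := by
  have hterm : ∀ x' : E, (∑ i : A, ceps ε x' (x i)) = 0 ∨ (∑ i : A, ceps ε x' (x i)) = ⊤ := by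
    intro x'
    by_cases hh : ∀ i : A, ceps ε x' (x i) = 0
    · exact Or.inl (Finset.sum_eq_zero fun i _ => hh i)
    · push_neg at hh
      obtain ⟨i, hi⟩ := hh
      refine Or.inr (ENNReal.sum_eq_top.mpr ⟨i, Finset.mem_univ _, ?_⟩)
      unfold ceps at hi ⊢
      split at hi <;> simp_all
  by_cases h0 : ∃ x' : E, (∑ i : A, ceps ε x' (x i)) = 0
  · obtain ⟨x', hx'⟩ := h0
    exact Or.inl (le_antisymm (hx' ▸ iInf_le _ x') zero_le)
  · push_neg at h0
    refine Or.inr (iInf_eq_top.mpr fun x' => ?_)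
    rcases hterm x' with h | h
    · exact absurd h (h0 x')
    · exact h

lemma lintegral_eq_zero_of_zero_or_top {α : Type*} [MeasurableSpace α] {ν : Measure α}
    {f : α → ℝ≥0∞} (hf : ∀ x, f x = 0 ∨ f x = ⊤) (h : ∫⁻ x, f x ∂ν ≠ ⊤) :
    ∫⁻ x, f x ∂ν = 0 := by
  have h2 : ∀ x, f x = 2 * f x := fun x => by rcases hf x with h|h <;> simp [h]
  have key : ∫⁻ x, f x ∂ν = 2 * ∫⁻ x, f x ∂ν := by
    conv_lhs => rw [lintegral_congr h2]
    exact lintegral_const_mul' 2 f (by norm_num)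
  have h0 : (∫⁻ x, f x ∂ν) + 0 = (∫⁻ x, f x ∂ν) + ∫⁻ x, f x ∂ν := by
    rw [add_zero, ← two_mul]; exact key
  exact ((ENNReal.add_right_inj h).mp h0).symm

lemma lintegral_one_add_cepsA {A : Finset (Fin K)} {ν : Measure ((j : A) → E)}
    (ε : ℝ) (h : ∫⁻ x, (1 + cepsA ε A x) ∂ν ≠ ⊤) :
    ∫⁻ x, (1 + cepsA ε A x) ∂ν = ν Set.univ := by
  have hsplit : ∫⁻ x, (1 + cepsA ε A x) ∂ν
      = ∫⁻ _, (1:ℝ≥0∞) ∂ν + ∫⁻ x, cepsA ε A x ∂ν :=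
    lintegral_add_left measurable_const _
  rw [hsplit] at h ⊢
  rw [lintegral_eq_zero_of_zero_or_top (cepsA_zero_or_top ε A) (fun hc => h (by simp [hc]))]
  simp [lintegral_const]

lemma count_subsets {A : Finset (Fin K)} {i : Fin K} (hi : i ∈ A) {L : ℕ} (hL : 1 ≤ L) :
    ((A.powersetCard L).filter (fun B => i ∈ B)).card = (A.card - 1).choose (L - 1) := by
  have h1 : (A.erase i).card = A.card - 1 := Finset.card_erase_of_mem hi
  rw [← h1, ← Finset.card_powersetCard]
  have hfwd : ∀ B ∈ (A.powersetCard L).filter (fun B => i ∈ B),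
      B.erase i ∈ Finset.powersetCard (L - 1) (A.erase i) := by
    intro B hB
    simp only [Finset.mem_filter, Finset.mem_powersetCard] at hB
    rw [Finset.mem_powersetCard]
    exact ⟨Finset.erase_subset_erase i hB.1.1,
      by rw [Finset.card_erase_of_mem hB.2, hB.1.2]⟩
  have hbwd : ∀ C ∈ Finset.powersetCard (L - 1) (A.erase i),
      insert i C ∈ (A.powersetCard L).filter (fun B => i ∈ B) := by
    intro C hC
    rw [Finset.mem_powersetCard] at hC
    have hiC : i ∉ C := fun h => (Finset.mem_erase.mp (hC.1 h)).1 rfl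
    simp only [Finset.mem_filter, Finset.mem_powersetCard]
    refine ⟨⟨Finset.insert_subset hi (hC.1.trans (Finset.erase_subset i A)), ?_⟩,
      Finset.mem_insert_self i C⟩
    rw [Finset.card_insert_of_notMem hiC, hC.2]
    omega
  exact Finset.card_bij' (fun B _ => B.erase i) (fun C _ => insert i C) hfwd hbwd
    (fun B hB => Finset.insert_erase (Finset.mem_filter.mp hB).2)
    (fun C hC => Finset.erase_insert
      (fun h => (Finset.mem_erase.mp ((Finset.mem_powersetCard.mp hC).1 h)).1 rfl))

lemma choose_ratio {k L : ℕ} (hL : 1 ≤ L) (hLk : L ≤ k) :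
    (k.choose L : ℝ≥0∞) / ((k - 1).choose (L - 1) : ℝ≥0∞) = (k : ℝ≥0∞) / (L : ℝ≥0∞) := by
  have key : k.choose L * L = k * (k - 1).choose (L - 1) := by
    have := Nat.add_one_mul_choose_eq (k - 1) (L - 1)
    have hk1 : k - 1 + 1 = k := by omega
    have hL1 : L - 1 + 1 = L := by omega
    rw [hk1, hL1] at this
    omega
  have hN : ((k - 1).choose (L - 1) : ℝ≥0∞) ≠ 0 := by
    simp only [ne_eq, Nat.cast_eq_zero]
    exact Nat.pos_iff_ne_zero.mp (Nat.choose_pos (by omega))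
  have hNt : ((k - 1).choose (L - 1) : ℝ≥0∞) ≠ ⊤ := ENNReal.natCast_ne_top _
  have hL0 : (L : ℝ≥0∞) ≠ 0 := by simp only [ne_eq, Nat.cast_eq_zero]; omega
  have hLt : (L : ℝ≥0∞) ≠ ⊤ := ENNReal.natCast_ne_top _
  rw [← ENNReal.mul_div_mul_right (k.choose L : ℝ≥0∞) _ hL0 hLt]
  have : (k.choose L : ℝ≥0∞) * L = (k : ℝ≥0∞) * ((k - 1).choose (L - 1) : ℝ≥0∞) := by
    exact_mod_cast key
  rw [this, mul_comm ((k - 1).choose (L - 1) : ℝ≥0∞) (L : ℝ≥0∞)]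
  exact ENNReal.mul_div_mul_right _ _ hN hNt

variable {i : Fin K}

lemma projMarg_zero (B : Finset (Fin K)) (i : Fin K) :
    projMarg B (0 : Measure ((j : B) → E)) i = 0 := by
  unfold projMarg; split <;> simp

lemma projMarg_add (B : Finset (Fin K)) (ν₁ ν₂ : Measure ((j : B) → E)) (i : Fin K) :
    projMarg B (ν₁ + ν₂) i = projMarg B ν₁ i + projMarg B ν₂ i := by
  unfold projMarg
  split
  · exact Measure.map_add _ _ (measurable_pi_apply _)
  · simp

lemma projMarg_smul (B : Finset (Fin K)) (c : ℝ≥0∞) (ν : Measure ((j : B) → E)) (i : Fin K) :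
    projMarg B (c • ν) i = c • projMarg B ν i := by
  unfold projMarg; split
  · exact Measure.map_smul c ν _
  · simp

lemma projMarg_finset_sum {ι : Type*} (s : Finset ι) (B : Finset (Fin K))
    (ν : ι → Measure ((j : B) → E)) (i : Fin K) :
    projMarg B (∑ a ∈ s, ν a) i = ∑ a ∈ s, projMarg B (ν a) i := by
  classical
  induction s using Finset.cons_induction with
  | empty => simp [projMarg_zero]
  | cons a s ha ih => rw [Finset.sum_cons, projMarg_add, ih, Finset.sum_cons]

lemma projMarg_map_res {B A : Finset (Fin K)} (hiB : i ∈ B) (h : B ⊆ A)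
    (ν : Measure ((j : A) → E)) : projMarg B (ν.map (res h)) i = projMarg A ν i := by
  have hiA : i ∈ A := h hiB
  unfold projMarg
  rw [dif_pos hiB, dif_pos hiA, Measure.map_map (measurable_pi_apply _) (measurable_res h)]
  rfl

end Helpers

/-- if `(π*_A)` attains the untruncated stratified MOT value `M(K)`,
then for `1 ≤ L ≤ K`,
`M(L) − M(K) ≤ Σ_{k=L+1}^K (k/L) Σ_{|A|=k} π*_A((ℝ^p)^A)`. -/
theorem stmt1 {E : Type*} [NormedAddCommGroup E] [NormedSpace ℝ E]
    [FiniteDimensional ℝ E] [MeasurableSpace E] [BorelSpace E]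
    (ε : ℝ) (hε : 0 < ε) (K L : ℕ) (hL : 1 ≤ L) (hLK : L ≤ K)
    (μ : Fin K → Measure E) (hμ : ∀ i, IsFiniteMeasure (μ i))
    (πS : (A : Finset (Fin K)) → Measure ((j : A) → E))
    (hfeas : ∀ i : Fin K,
      ∑ A ∈ (SK K).filter (fun A => A.card ≤ K ∧ i ∈ A), projMarg A (πS A) i = μ i)
    (hopt : ∑ A ∈ (SK K).filter (fun A => A.card ≤ K),
        ∫⁻ x, (1 + cepsA ε A x) ∂(πS A) = Mval ε K K μ) :
    Mval ε K L μ - Mval ε K K μ ≤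
      ∑ k ∈ Finset.Icc (L + 1) K,
        ((k : ℝ≥0∞) / (L : ℝ≥0∞)) *
          ∑ A ∈ (SK K).filter (fun A => A.card = k), πS A Set.univ := by
  classical
  rw [tsub_le_iff_right]
  by_cases hKtop : Mval ε K K μ = ⊤
  · rw [hKtop]; simp
  have hcardK : ∀ A : Finset (Fin K), A.card ≤ K := fun A => by
    simpa using Finset.card_le_card (Finset.subset_univ A)
  set I : Finset (Fin K) → ℝ≥0∞ := fun A => ∫⁻ x, (1 + cepsA ε A x) ∂(πS A) with hI
  have hfin : ∀ A ∈ (SK K).filter (fun A => A.card ≤ K), I A ≠ ⊤ := by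
    intro A hA
    refine ne_top_of_le_ne_top (hopt ▸ hKtop) ?_
    exact Finset.single_le_sum (f := I) (fun _ _ => zero_le) hA
  set N : Finset (Fin K) → ℝ≥0∞ :=
    fun A => (((A.card - 1).choose (L - 1) : ℕ) : ℝ≥0∞) with hN
  set big : Finset (Finset (Fin K)) := (SK K).filter (fun A => L < A.card) with hbig
  have hNne : ∀ A ∈ big, N A ≠ 0 := by
    intro A hA
    simp only [hbig, Finset.mem_filter] at hA
    simp only [hN, ne_eq, Nat.cast_eq_zero]
    exact Nat.pos_iff_ne_zero.mp (Nat.choose_pos (by omega))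
  have hNnetop : ∀ A : Finset (Fin K), N A ≠ ⊤ := fun A => ENNReal.natCast_ne_top _
  set π' : (B : Finset (Fin K)) → Measure ((j : B) → E) := fun B =>
    (if B.card ≤ L then πS B else 0) +
      ∑ A ∈ big, if h : B ⊆ A ∧ B.card = L then (N A)⁻¹ • (πS A).map (res h.1) else 0
    with hπ'
  -- feasibility of π'
  have hfeas' : ∀ i : Fin K,
      ∑ B ∈ (SK K).filter (fun B => B.card ≤ L ∧ i ∈ B), projMarg B (π' B) i = μ i := by
    intro i
    have hexp : ∀ B ∈ (SK K).filter (fun B => B.card ≤ L ∧ i ∈ B),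
        projMarg B (π' B) i = projMarg B (πS B) i +
          ∑ A ∈ big, (if B ⊆ A ∧ B.card = L then (N A)⁻¹ • projMarg A (πS A) i else 0) := by
      intro B hB
      simp only [Finset.mem_filter] at hB
      obtain ⟨hBSK, hBL, hiB⟩ := hB
      rw [hπ', projMarg_add, projMarg_finset_sum, if_pos hBL]
      congr 1
      refine Finset.sum_congr rfl fun A hA => ?_
      by_cases h : B ⊆ A ∧ B.card = L
      · rw [dif_pos h, if_pos h, projMarg_smul, projMarg_map_res hiB h.1]
      · rw [dif_neg h, if_neg h, projMarg_zero]
    rw [Finset.sum_congr rfl hexp, Finset.sum_add_distrib, Finset.sum_comm]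
    have hinner : ∀ A ∈ big,
        (∑ B ∈ (SK K).filter (fun B => B.card ≤ L ∧ i ∈ B),
          if B ⊆ A ∧ B.card = L then (N A)⁻¹ • projMarg A (πS A) i else 0)
        = projMarg A (πS A) i := by
      intro A hA
      have hALcard : L < A.card := by
        rw [hbig] at hA; exact (Finset.mem_filter.mp hA).2
      rw [← Finset.sum_filter]
      by_cases hiA : i ∈ A
      · have hset : ((SK K).filter (fun B => B.card ≤ L ∧ i ∈ B)).filter
            (fun B => B ⊆ A ∧ B.card = L)
            = (A.powersetCard L).filter (fun B => i ∈ B) := by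
          ext B
          simp only [Finset.mem_filter, Finset.mem_powersetCard, SK,
            Finset.mem_univ, true_and]
          constructor
          · rintro ⟨⟨_, hcard, hiB⟩, hsub, hcardL⟩
            exact ⟨⟨hsub, hcardL⟩, hiB⟩
          · rintro ⟨⟨hsub, hcardL⟩, hiB⟩
            exact ⟨⟨⟨i, hiB⟩, le_of_eq hcardL, hiB⟩, hsub, hcardL⟩
        rw [hset, Finset.sum_const, count_subsets hiA hL]
        have : ((A.card - 1).choose (L - 1)) • ((N A)⁻¹ • projMarg A (πS A) i)
            = ((N A) * (N A)⁻¹) • projMarg A (πS A) i := by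
          rw [← Nat.cast_smul_eq_nsmul ℝ≥0∞, smul_smul]
        rw [this, ENNReal.mul_inv_cancel (hNne A hA) (hNnetop A), one_smul]
      · have hzero : projMarg A (πS A) i = 0 := by
          unfold projMarg; rw [dif_neg hiA]
        rw [hzero]
        exact Finset.sum_eq_zero fun B _ => smul_zero _
    rw [Finset.sum_congr rfl hinner]
    -- now combine the two sums
    set f : Finset (Fin K) → Measure E := fun A => projMarg A (πS A) i with hf
    have hT : (SK K).filter (fun A => A.card ≤ K ∧ i ∈ A)
        = (SK K).filter (fun A => i ∈ A) := by
      ext A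
      simp only [Finset.mem_filter, and_assoc]
      exact ⟨fun ⟨h1, _, h3⟩ => ⟨h1, h3⟩, fun ⟨h1, h3⟩ => ⟨h1, hcardK A, h3⟩⟩
    have hsplit := Finset.sum_filter_add_sum_filter_not
      ((SK K).filter (fun A => i ∈ A)) (fun A => A.card ≤ L) f
    have h1 : ((SK K).filter (fun A => i ∈ A)).filter (fun A => A.card ≤ L)
        = (SK K).filter (fun B => B.card ≤ L ∧ i ∈ B) := by
      rw [Finset.filter_filter]
      exact Finset.filter_congr fun A _ => by tauto
    have h2 : ((SK K).filter (fun A => i ∈ A)).filter (fun A => ¬A.card ≤ L)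
        = big.filter (fun A => i ∈ A) := by
      rw [Finset.filter_filter, hbig, Finset.filter_filter]
      refine Finset.filter_congr fun A _ => ?_
      constructor
      · rintro ⟨h1, h2⟩; exact ⟨by omega, h1⟩
      · rintro ⟨h1, h2⟩; exact ⟨h2, by omega⟩
    have h3 : ∑ A ∈ big.filter (fun A => i ∈ A), f A = ∑ A ∈ big, f A := by
      refine Finset.sum_filter_of_ne fun A _ hne => ?_
      by_contra hiA
      apply hne
      show projMarg A (πS A) i = 0
      unfold projMarg
      rw [dif_neg hiA]
    rw [← hfeas i, hT, ← hsplit, h1, h2, h3]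
  -- the candidate value is in the admissible set
  have hle : Mval ε K L μ ≤ ∑ B ∈ (SK K).filter (fun B => B.card ≤ L),
      ∫⁻ x, (1 + cepsA ε B x) ∂(π' B) :=
    sInf_le ⟨π', hfeas', rfl⟩
  refine hle.trans ?_
  -- cost bound
  have hcost : ∀ B ∈ (SK K).filter (fun B => B.card ≤ L),
      ∫⁻ x, (1 + cepsA ε B x) ∂(π' B) ≤ I B +
        ∑ A ∈ big, (if B ⊆ A ∧ B.card = L then (N A)⁻¹ * I A else 0) := by
    intro B hB
    obtain ⟨hBSK, hBL⟩ := Finset.mem_filter.mp hB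
    rw [hπ']
    simp only [lintegral_add_measure, lintegral_finset_sum_measure, if_pos hBL]
    refine add_le_add le_rfl (Finset.sum_le_sum fun A hA => ?_)
    by_cases h : B ⊆ A ∧ B.card = L
    · rw [dif_pos h, if_pos h, lintegral_smul_measure]
      refine mul_le_mul_right ?_ _
      refine (lintegral_map_le _ (res h.1)).trans ?_
      exact lintegral_mono fun x => add_le_add le_rfl (cepsA_res_le ε h.1 x)
    · rw [dif_neg h, if_neg h]
      simp
  refine (Finset.sum_le_sum hcost).trans ?_
  rw [Finset.sum_add_distrib, Finset.sum_comm]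
  have hmass : ∀ A ∈ big, I A = πS A Set.univ := by
    intro A hA
    refine lintegral_one_add_cepsA ε (hfin A ?_)
    rw [hbig] at hA
    simp only [Finset.mem_filter] at hA ⊢
    exact ⟨hA.1, hcardK A⟩
  have hcount : ∀ A ∈ big,
      (∑ B ∈ (SK K).filter (fun B => B.card ≤ L),
        if B ⊆ A ∧ B.card = L then (N A)⁻¹ * I A else 0)
      = ((A.card : ℝ≥0∞) / (L : ℝ≥0∞)) * πS A Set.univ := by
    intro A hA
    have hALcard : L < A.card := by
      rw [hbig] at hA; exact (Finset.mem_filter.mp hA).2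
    rw [← Finset.sum_filter]
    have hset : ((SK K).filter (fun B => B.card ≤ L)).filter (fun B => B ⊆ A ∧ B.card = L)
        = A.powersetCard L := by
      ext B
      simp only [Finset.mem_filter, Finset.mem_powersetCard, SK, Finset.mem_univ, true_and]
      constructor
      · rintro ⟨⟨_, hcard⟩, hsub, hcardL⟩
        exact ⟨hsub, hcardL⟩
      · rintro ⟨hsub, hcardL⟩
        exact ⟨⟨Finset.card_pos.mp (by omega), le_of_eq hcardL⟩, hsub, hcardL⟩
    rw [hset, Finset.sum_const, Finset.card_powersetCard, nsmul_eq_mul, ← mul_assoc,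
      hmass A hA]
    congr 1
    rw [← div_eq_mul_inv]
    exact choose_ratio hL (le_of_lt hALcard)
  rw [Finset.sum_congr rfl hcount]
  have hbigsum : ∑ A ∈ big, ((A.card : ℝ≥0∞) / (L : ℝ≥0∞)) * πS A Set.univ
      = ∑ k ∈ Finset.Icc (L + 1) K, ((k : ℝ≥0∞) / (L : ℝ≥0∞)) *
          ∑ A ∈ (SK K).filter (fun A => A.card = k), πS A Set.univ := by
    have hmap : ∀ A ∈ big, A.card ∈ Finset.Icc (L + 1) K := by
      intro A hA
      rw [hbig] at hA
      have := (Finset.mem_filter.mp hA).2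
      exact Finset.mem_Icc.mpr ⟨by omega, hcardK A⟩
    rw [← Finset.sum_fiberwise_of_maps_to hmap
      (fun A => ((A.card : ℝ≥0∞) / (L : ℝ≥0∞)) * πS A Set.univ)]
    refine Finset.sum_congr rfl fun k hk => ?_
    have hk' := Finset.mem_Icc.mp hk
    have hflt : big.filter (fun A => A.card = k) = (SK K).filter (fun A => A.card = k) := by
      rw [hbig, Finset.filter_filter]
      exact Finset.filter_congr fun A _ => by constructor <;> intro h <;>
        first
        | exact h.2
        | exact ⟨by omega, h⟩
    rw [hflt, Finset.mul_sum]
    refine Finset.sum_congr rfl fun A hA => ?_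
    rw [(Finset.mem_filter.mp hA).2]
  rw [hbigsum, add_comm]
  refine add_le_add le_rfl (le_trans (Finset.sum_le_sum_of_subset ?_) (le_of_eq hopt))
  intro B hB
  obtain ⟨h1, h2⟩ := Finset.mem_filter.mp hB
  exact Finset.mem_filter.mpr ⟨h1, h2.trans hLK⟩

end
end

section
/- For every 1 ≤ L ≤ K, the optimal value of the truncated stratified multimarginal optimal transport problem M(L) equals the optimal value of the truncated linear program: min over w : 𝓘_L → [0,1] satisfying, for every i ∈ {1,…,K} and every x ∈ 𝒳_i, Σ_{ι∈𝓘_L : (x,i)∈ι} w(ι) = μ_i(x), of the objective Σ_{ι∈𝓘_L} w(ι). In particular, taking L = K gives the equivalence of the untruncated problems. -/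
open scoped ENNReal BigOperators

noncomputable section

namespace Stmt2

variable {E : Type*} [NormedAddCommGroup E] [DecidableEq E] {K : ℕ}

/-- The cost `c_ε(x, x') = 0` if `‖x − x'‖ ≤ ε` and `+∞` otherwise. -/
def ceps (ε : ℝ) (x y : E) : ℝ≥0∞ := if ‖x - y‖ ≤ ε then 0 else ⊤

/-- The cost tensor `c_{ε,A}(x_A) = inf_{x'∈E} Σ_{i∈A} c_ε(x', x_i)` for a tuple of
points of the finite sets `𝒳 i`, `i ∈ A`. -/
def cepsA (ε : ℝ) (𝒳 : Fin K → Finset E) (A : Finset (Fin K))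
    (x : (j : A) → ↥(𝒳 j.1)) : ℝ≥0∞ :=
  ⨅ x' : E, ∑ j : A, ceps ε x' (x j : E)

/-- The `i`-th marginal of a nonnegative function on `∏_{j∈A} 𝒳 j`. -/
def marg (𝒳 : Fin K → Finset E) (A : Finset (Fin K))
    (π : ((j : A) → ↥(𝒳 j.1)) → ℝ) (i : Fin K) (xi : ↥(𝒳 i)) : ℝ :=
  if hi : i ∈ A then
    ∑ x : (j : A) → ↥(𝒳 j.1), (if x ⟨i, hi⟩ = xi then π x else 0)
  else 0

/-- The value `M(L)` of the level-`L` truncated stratified MOT problem over the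
finite sets `𝒳 i` with weights `μ`. -/
def Mval (ε : ℝ) (𝒳 : Fin K → Finset E) (μ : (i : Fin K) → E → ℝ) (L : ℕ) : ℝ≥0∞ :=
  sInf {v : ℝ≥0∞ |
    ∃ π : (A : Finset (Fin K)) → ((j : A) → ↥(𝒳 j.1)) → ℝ,
      (∀ A x, 0 ≤ π A x) ∧
      (∀ (i : Fin K) (xi : ↥(𝒳 i)),
        ∑ A ∈ Finset.univ.filter
            (fun A : Finset (Fin K) => A.Nonempty ∧ A.card ≤ L ∧ i ∈ A),
          marg 𝒳 A (π A) i xi = μ i xi) ∧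
      v = ∑ A ∈ Finset.univ.filter
            (fun A : Finset (Fin K) => A.Nonempty ∧ A.card ≤ L),
          ∑ x : (j : A) → ↥(𝒳 j.1),
            (1 + cepsA ε 𝒳 A x) * ENNReal.ofReal (π A x)}

/-- `ι` is a valid interaction of size at most `L`: a partial assignment (with
pairwise distinct labels by construction) of points `x_j ∈ 𝒳 j`, nonempty, of size at
most `L`, such that some point `x'` is within distance `ε` of every assigned point. -/
def ValidI (ε : ℝ) (𝒳 : Fin K → Finset E) (L : ℕ)
    (ι : (i : Fin K) → Option ↥(𝒳 i)) : Prop :=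
  (∃ i, (ι i).isSome) ∧
  (Finset.univ.filter fun i => (ι i).isSome).card ≤ L ∧
  (∃ x' : E, ∀ (i : Fin K) (xi : ↥(𝒳 i)), ι i = some xi → ‖x' - (xi : E)‖ ≤ ε)

/-- The value of the level-`L` truncated linear program: minimize `Σ_ι w(ι)` over
`w : 𝓘_L → [0,1]` with `Σ_{ι ∋ (x,i)} w(ι) = μ_i(x)` for all `i` and `x ∈ 𝒳 i`. -/
def LPval (ε : ℝ) (𝒳 : Fin K → Finset E) (μ : (i : Fin K) → E → ℝ) (L : ℕ) : ℝ≥0∞ :=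
  sInf {v : ℝ≥0∞ |
    ∃ w : ((i : Fin K) → Option ↥(𝒳 i)) → ℝ,
      (∀ ι, 0 ≤ w ι ∧ w ι ≤ 1) ∧
      (∀ ι, ¬ ValidI ε 𝒳 L ι → w ι = 0) ∧
      (∀ (i : Fin K) (xi : ↥(𝒳 i)),
        ∑ ι ∈ Finset.univ.filter
            (fun ι : (i : Fin K) → Option ↥(𝒳 i) => ι i = some xi),
          w ι = μ i xi) ∧
      v = ENNReal.ofReal (∑ ι, w ι)}

section Aux
set_option linter.unusedSectionVars false
variable (𝒳 : Fin K → Finset E)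
def supp (ι : (i : Fin K) → Option ↥(𝒳 i)) : Finset (Fin K) :=
  Finset.univ.filter fun i => (ι i).isSome
lemma mem_supp {ι : (i : Fin K) → Option ↥(𝒳 i)} {i : Fin K} :
    i ∈ supp 𝒳 ι ↔ (ι i).isSome := by simp [supp]
lemma supp_nonempty {ι : (i : Fin K) → Option ↥(𝒳 i)} :
    (supp 𝒳 ι).Nonempty ↔ ∃ i, (ι i).isSome := by
  constructor
  · rintro ⟨i, hi⟩; exact ⟨i, (mem_supp 𝒳).mp hi⟩
  · rintro ⟨i, hi⟩; exact ⟨i, (mem_supp 𝒳).mpr hi⟩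
def extract (ι : (i : Fin K) → Option ↥(𝒳 i)) (j : ↥(supp 𝒳 ι)) : ↥(𝒳 j.1) :=
  (ι j.1).get ((mem_supp 𝒳).mp j.2)
def toι (A : Finset (Fin K)) (x : (j : A) → ↥(𝒳 j.1)) (i : Fin K) : Option ↥(𝒳 i) :=
  if h : i ∈ A then some (x ⟨i, h⟩) else none
lemma toι_left_inv (ι : (i : Fin K) → Option ↥(𝒳 i)) :
    toι 𝒳 (supp 𝒳 ι) (extract 𝒳 ι) = ι := by
  funext i
  by_cases h : (ι i).isSome
  · rw [toι, dif_pos ((mem_supp 𝒳).mpr h)]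
    exact Option.some_get h
  · rw [toι, dif_neg (fun hm => h ((mem_supp 𝒳).mp hm))]
    exact (Option.not_isSome_iff_eq_none.mp h).symm
lemma supp_toι (A : Finset (Fin K)) (x : (j : A) → ↥(𝒳 j.1)) :
    supp 𝒳 (toι 𝒳 A x) = A := by
  ext i
  by_cases h : i ∈ A <;> simp [mem_supp, toι, h]
lemma sigma_eq (A : Finset (Fin K)) (x : (j : A) → ↥(𝒳 j.1)) :
    (⟨supp 𝒳 (toι 𝒳 A x), extract 𝒳 (toι 𝒳 A x)⟩ :
      Σ B : Finset (Fin K), (j : B) → ↥(𝒳 j.1)) = ⟨A, x⟩ := by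
  have key : ∀ (B : Finset (Fin K)) (hB : B = A) (y : (j : B) → ↥(𝒳 j.1)),
      (∀ (j : Fin K) (hj : j ∈ B) (hj' : j ∈ A), y ⟨j, hj⟩ = x ⟨j, hj'⟩) →
      (⟨B, y⟩ : Σ B : Finset (Fin K), (j : B) → ↥(𝒳 j.1)) = ⟨A, x⟩ := by
    intro B hB
    subst hB
    intro y hy
    have : y = x := by
      funext j
      exact hy j.1 j.2 j.2
    rw [this]
  refine key _ (supp_toι 𝒳 A x) _ ?_
  intro j hj hj'
  simp [extract, toι, hj']
def sigmaEquiv : ((i : Fin K) → Option ↥(𝒳 i)) ≃ Σ A : Finset (Fin K), (j : A) → ↥(𝒳 j.1) where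
  toFun ι := ⟨supp 𝒳 ι, extract 𝒳 ι⟩
  invFun p := toι 𝒳 p.1 p.2
  left_inv ι := toι_left_inv 𝒳 ι
  right_inv p := by cases p with | mk A x => exact sigma_eq 𝒳 A x
lemma sum_pi_option {M : Type*} [AddCommMonoid M] (F : ((i : Fin K) → Option ↥(𝒳 i)) → M) :
    ∑ ι, F ι = ∑ A : Finset (Fin K), ∑ x : (j : A) → ↥(𝒳 j.1), F (toι 𝒳 A x) := by
  have h2 : ∑ A : Finset (Fin K), ∑ x : (j : A) → ↥(𝒳 j.1), F (toι 𝒳 A x)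
      = ∑ p : Σ A : Finset (Fin K), (j : A) → ↥(𝒳 j.1), F (toι 𝒳 p.1 p.2) := by
    rw [← Finset.univ_sigma_univ, Finset.sum_sigma]
  rw [h2]
  refine Fintype.sum_equiv (sigmaEquiv 𝒳) _ _ ?_
  intro ι
  simp only [sigmaEquiv, Equiv.coe_fn_mk]
  conv_lhs => rw [← toι_left_inv 𝒳 ι]
lemma comp_sigma {M : Type*} (G : (Σ A : Finset (Fin K), (j : A) → ↥(𝒳 j.1)) → M)
    (A : Finset (Fin K)) (x : (j : A) → ↥(𝒳 j.1)) :
    G ⟨supp 𝒳 (toι 𝒳 A x), extract 𝒳 (toι 𝒳 A x)⟩ = G ⟨A, x⟩ := by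
  rw [sigma_eq]
lemma toι_eq_some {A : Finset (Fin K)} {x : (j : A) → ↥(𝒳 j.1)} {i : Fin K}
    (hi : i ∈ A) {xi : ↥(𝒳 i)} : toι 𝒳 A x i = some xi ↔ x ⟨i, hi⟩ = xi := by
  rw [toι, dif_pos hi, Option.some_inj]
lemma toι_eq_none {A : Finset (Fin K)} {x : (j : A) → ↥(𝒳 j.1)} {i : Fin K}
    (hi : i ∉ A) : toι 𝒳 A x i = none := dif_neg hi
lemma toι_self (A : Finset (Fin K)) (x : (j : A) → ↥(𝒳 j.1)) (j : A) :
    toι 𝒳 A x j.1 = some (x j) := by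
  rw [toι, dif_pos j.2]
lemma cepsA_eq_zero {ε : ℝ} {A : Finset (Fin K)} {x : (j : A) → ↥(𝒳 j.1)}
    (h : ∃ x' : E, ∀ j : A, ‖x' - (x j : E)‖ ≤ ε) : cepsA ε 𝒳 A x = 0 := by
  obtain ⟨x', hx'⟩ := h
  refine le_antisymm ?_ zero_le
  refine le_trans (iInf_le _ x') ?_
  refine le_of_eq (Finset.sum_eq_zero ?_)
  intro j _
  exact if_pos (hx' j)
lemma cepsA_eq_top {ε : ℝ} {A : Finset (Fin K)} {x : (j : A) → ↥(𝒳 j.1)}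
    (h : ¬ ∃ x' : E, ∀ j : A, ‖x' - (x j : E)‖ ≤ ε) : cepsA ε 𝒳 A x = ⊤ := by
  rw [cepsA, iInf_eq_top]
  intro x'
  push_neg at h
  obtain ⟨j, hj⟩ := h x'
  rw [ENNReal.sum_eq_top]
  exact ⟨j, Finset.mem_univ j, if_neg (not_le.mpr hj)⟩
lemma marg_nonneg (A : Finset (Fin K)) (π : ((j : A) → ↥(𝒳 j.1)) → ℝ)
    (hπ : ∀ x, 0 ≤ π x) (i : Fin K) (xi : ↥(𝒳 i)) : 0 ≤ marg 𝒳 A π i xi := by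
  rw [marg]
  split
  · refine Finset.sum_nonneg fun x _ => ?_
    split
    · exact hπ x
    · exact le_refl 0
  · exact le_refl 0
lemma pi_le_marg (A : Finset (Fin K)) (π : ((j : A) → ↥(𝒳 j.1)) → ℝ)
    (hπ : ∀ x, 0 ≤ π x) {i : Fin K} (hi : i ∈ A) (x : (j : A) → ↥(𝒳 j.1)) :
    π x ≤ marg 𝒳 A π i (x ⟨i, hi⟩) := by
  rw [marg, dif_pos hi]
  have h := Finset.single_le_sum
    (f := fun x' : (j : A) → ↥(𝒳 j.1) => if x' ⟨i, hi⟩ = x ⟨i, hi⟩ then π x' else 0)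
    (fun x' _ => by dsimp only; split; exacts [hπ x', le_refl 0]) (Finset.mem_univ x)
  simpa using h
lemma mu_le_one (μ : (i : Fin K) → E → ℝ) (hμpos : ∀ i, ∀ x ∈ 𝒳 i, 0 < μ i x)
    (hmass : ∑ i : Fin K, ∑ x ∈ 𝒳 i, μ i x = 1) (i : Fin K) {y : E} (hy : y ∈ 𝒳 i) :
    μ i y ≤ 1 := by
  calc μ i y ≤ ∑ x ∈ 𝒳 i, μ i x :=
        Finset.single_le_sum (fun x hx => (hμpos i x hx).le) hy
    _ ≤ ∑ j : Fin K, ∑ x ∈ 𝒳 j, μ j x :=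
        Finset.single_le_sum
          (fun j _ => Finset.sum_nonneg fun x hx => (hμpos j x hx).le) (Finset.mem_univ i)
    _ = 1 := hmass
lemma marginal_master (L : ℕ) (i : Fin K) (xi : ↥(𝒳 i))
    (g : ((i : Fin K) → Option ↥(𝒳 i)) → ℝ)
    (hg : ∀ ι, ¬ ((∃ i, (ι i).isSome) ∧ (supp 𝒳 ι).card ≤ L) → g ι = 0) :
    ∑ ι ∈ Finset.univ.filter
        (fun ι : (i : Fin K) → Option ↥(𝒳 i) => ι i = some xi), g ι
      = ∑ A ∈ Finset.univ.filter
          (fun A : Finset (Fin K) => A.Nonempty ∧ A.card ≤ L ∧ i ∈ A),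
          ∑ x : (j : A) → ↥(𝒳 j.1),
            (if toι 𝒳 A x i = some xi then g (toι 𝒳 A x) else 0) := by
  rw [Finset.sum_filter, sum_pi_option 𝒳 (fun ι => if ι i = some xi then g ι else 0)]
  refine (Finset.sum_subset (Finset.filter_subset _ _) ?_).symm
  intro A _ hA
  rw [Finset.mem_filter, not_and, not_and, not_and] at hA
  refine Finset.sum_eq_zero fun x _ => ?_
  by_cases hi : i ∈ A
  · have hcard : ¬ A.card ≤ L := fun hc => hA (Finset.mem_univ A) ⟨i, hi⟩ hc hi
    have hg0 : g (toι 𝒳 A x) = 0 := by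
      refine hg _ ?_
      rintro ⟨-, hc⟩
      rw [supp_toι] at hc
      exact hcard hc
    simp [hg0]
  · simp [toι_eq_none 𝒳 hi]

lemma suppcard_eq (ι : (i : Fin K) → Option ↥(𝒳 i)) :
    (Finset.univ.filter fun i => (ι i).isSome).card = (supp 𝒳 ι).card := rfl

lemma dir1 (ε : ℝ) (μ : (i : Fin K) → E → ℝ) (L : ℕ) :
    Mval ε 𝒳 μ L ≤ LPval ε 𝒳 μ L := by
  refine le_sInf ?_
  rintro v ⟨w, hw01, hw0, hwmarg, rfl⟩
  have hg : ∀ ι, ¬ ((∃ i, (ι i).isSome) ∧ (supp 𝒳 ι).card ≤ L) → w ι = 0 := by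
    intro ι h
    exact hw0 ι fun hvalid => h ⟨hvalid.1, hvalid.2.1⟩
  have hwvalid : ∀ ι, ¬ ValidI ε 𝒳 L ι → w ι = 0 := hw0
  apply sInf_le
  refine ⟨fun A x => w (toι 𝒳 A x), fun A x => (hw01 _).1, ?_, ?_⟩
  · intro i xi
    rw [← hwmarg i xi, marginal_master 𝒳 L i xi w hg]
    refine Finset.sum_congr rfl ?_
    intro A hA
    rw [Finset.mem_filter] at hA
    obtain ⟨-, -, -, hi⟩ := hA
    rw [marg, dif_pos hi]
    refine Finset.sum_congr rfl fun x _ => ?_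
    simp only [toι_eq_some 𝒳 hi]
  · -- objective
    refine Eq.symm ?_
    have step1 : ∀ (A : Finset (Fin K)) (x : (j : A) → ↥(𝒳 j.1)),
        (1 + cepsA ε 𝒳 A x) * ENNReal.ofReal (w (toι 𝒳 A x))
          = ENNReal.ofReal (w (toι 𝒳 A x)) := by
      intro A x
      by_cases hw : w (toι 𝒳 A x) = 0
      · simp [hw]
      · have hvalid : ValidI ε 𝒳 L (toι 𝒳 A x) := by
          by_contra h
          exact hw (hw0 _ h)
        obtain ⟨-, -, x', hx'⟩ := hvalid
        have hc : cepsA ε 𝒳 A x = 0 :=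
          cepsA_eq_zero 𝒳 ⟨x', fun j => hx' j.1 (x j) (toι_self 𝒳 A x j)⟩
        rw [hc, add_zero, one_mul]
    calc ∑ A ∈ Finset.univ.filter
            (fun A : Finset (Fin K) => A.Nonempty ∧ A.card ≤ L),
          ∑ x : (j : A) → ↥(𝒳 j.1),
            (1 + cepsA ε 𝒳 A x) * ENNReal.ofReal (w (toι 𝒳 A x))
        = ∑ A ∈ Finset.univ.filter
            (fun A : Finset (Fin K) => A.Nonempty ∧ A.card ≤ L),
          ∑ x : (j : A) → ↥(𝒳 j.1), ENNReal.ofReal (w (toι 𝒳 A x)) := by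
          exact Finset.sum_congr rfl fun A _ => Finset.sum_congr rfl fun x _ => step1 A x
      _ = ∑ A : Finset (Fin K),
          ∑ x : (j : A) → ↥(𝒳 j.1), ENNReal.ofReal (w (toι 𝒳 A x)) := by
          refine Finset.sum_subset (Finset.filter_subset _ _) ?_
          intro A _ hA
          rw [Finset.mem_filter, not_and, not_and] at hA
          refine Finset.sum_eq_zero fun x _ => ?_
          have hw : w (toι 𝒳 A x) = 0 := by
            refine hg _ ?_
            rintro ⟨hex, hc⟩
            rw [supp_toι] at hc
            have hne : A.Nonempty := by
              obtain ⟨i, hi⟩ := hex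
              rw [← mem_supp 𝒳, supp_toι] at hi
              exact ⟨i, hi⟩
            exact hA (Finset.mem_univ A) hne hc
          simp [hw]
      _ = ∑ ι, ENNReal.ofReal (w ι) :=
          (sum_pi_option 𝒳 (fun ι => ENNReal.ofReal (w ι))).symm
      _ = ENNReal.ofReal (∑ ι, w ι) :=
          (ENNReal.ofReal_sum_of_nonneg fun ι _ => (hw01 ι).1).symm



def wOf (L : ℕ) (π : (A : Finset (Fin K)) → ((j : A) → ↥(𝒳 j.1)) → ℝ)
    (ι : (i : Fin K) → Option ↥(𝒳 i)) : ℝ :=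
  if (supp 𝒳 ι).Nonempty ∧ (supp 𝒳 ι).card ≤ L then π (supp 𝒳 ι) (extract 𝒳 ι) else 0

lemma wOf_toι (L : ℕ) (π : (A : Finset (Fin K)) → ((j : A) → ↥(𝒳 j.1)) → ℝ)
    (A : Finset (Fin K)) (x : (j : A) → ↥(𝒳 j.1)) :
    wOf 𝒳 L π (toι 𝒳 A x) = if A.Nonempty ∧ A.card ≤ L then π A x else 0 :=
  comp_sigma 𝒳
    (fun p : Σ B : Finset (Fin K), (j : B) → ↥(𝒳 j.1) =>
      if p.1.Nonempty ∧ p.1.card ≤ L then π p.1 p.2 else 0) A x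

lemma dir2 (ε : ℝ) (μ : (i : Fin K) → E → ℝ)
    (hμpos : ∀ i, ∀ x ∈ 𝒳 i, 0 < μ i x)
    (hmass : ∑ i : Fin K, ∑ x ∈ 𝒳 i, μ i x = 1) (L : ℕ) :
    LPval ε 𝒳 μ L ≤ Mval ε 𝒳 μ L := by
  refine le_sInf ?_
  rintro v ⟨π, hπ0, hπmarg, rfl⟩
  by_cases htop : (∑ A ∈ Finset.univ.filter
      (fun A : Finset (Fin K) => A.Nonempty ∧ A.card ≤ L),
      ∑ x : (j : A) → ↥(𝒳 j.1),
        (1 + cepsA ε 𝒳 A x) * ENNReal.ofReal (π A x)) = ⊤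
  · rw [htop]; exact le_top
  have key : ∀ A ∈ Finset.univ.filter
      (fun A : Finset (Fin K) => A.Nonempty ∧ A.card ≤ L),
      ∀ x : (j : A) → ↥(𝒳 j.1), cepsA ε 𝒳 A x = ⊤ → π A x = 0 := by
    intro A hA x hc
    by_contra hne
    have hpos : 0 < π A x := lt_of_le_of_ne (hπ0 A x) (Ne.symm hne)
    have hterm : (1 + cepsA ε 𝒳 A x) * ENNReal.ofReal (π A x) = ⊤ := by
      have h0 : ENNReal.ofReal (π A x) ≠ 0 := by
        simp [ENNReal.ofReal_eq_zero, not_le, hpos]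
      rw [hc, add_top, ENNReal.top_mul h0]
    apply htop
    rw [ENNReal.sum_eq_top]
    exact ⟨A, hA, by rw [ENNReal.sum_eq_top]; exact ⟨x, Finset.mem_univ x, hterm⟩⟩
  apply sInf_le
  refine ⟨wOf 𝒳 L π, ?_, ?_, ?_, ?_⟩
  · -- bounds
    intro ι
    constructor
    · rw [wOf]; split; exacts [hπ0 _ _, le_refl 0]
    · rw [wOf]; split
      · rename_i h
        obtain ⟨hne, hcard⟩ := h
        obtain ⟨i, hi⟩ := hne
        calc π (supp 𝒳 ι) (extract 𝒳 ι)
            ≤ marg 𝒳 (supp 𝒳 ι) (π (supp 𝒳 ι)) i (extract 𝒳 ι ⟨i, hi⟩) :=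
              pi_le_marg 𝒳 _ _ (hπ0 _) hi _
          _ ≤ μ i (extract 𝒳 ι ⟨i, hi⟩ : E) := by
              rw [← hπmarg i (extract 𝒳 ι ⟨i, hi⟩)]
              refine Finset.single_le_sum
                (fun A' _ => marg_nonneg 𝒳 A' (π A') (hπ0 A') i _) ?_
              exact Finset.mem_filter.mpr ⟨Finset.mem_univ _, ⟨i, hi⟩, hcard, hi⟩
          _ ≤ 1 := mu_le_one 𝒳 μ hμpos hmass i (extract 𝒳 ι ⟨i, hi⟩).2
      · exact zero_le_one
  · -- zero on invalid
    intro ι hnv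
    rw [wOf]
    split
    · rename_i h
      obtain ⟨hne, hcard⟩ := h
      have hex : ∃ i, (ι i).isSome := (supp_nonempty 𝒳).mp hne
      have hno : ¬ ∃ x' : E, ∀ (i : Fin K) (xi : ↥(𝒳 i)),
          ι i = some xi → ‖x' - (xi : E)‖ ≤ ε :=
        fun hx' => hnv ⟨hex, hcard, hx'⟩
      refine key (supp 𝒳 ι)
        (Finset.mem_filter.mpr ⟨Finset.mem_univ _, hne, hcard⟩) (extract 𝒳 ι) ?_
      refine cepsA_eq_top 𝒳 ?_
      rintro ⟨x', hx'⟩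
      apply hno
      refine ⟨x', fun i xi hsome => ?_⟩
      have hi : i ∈ supp 𝒳 ι := (mem_supp 𝒳).mpr (by rw [hsome]; rfl)
      have hext : extract 𝒳 ι ⟨i, hi⟩ = xi := by
        simp only [extract]
        simp [hsome]
      have h2 := hx' ⟨i, hi⟩
      rw [hext] at h2
      exact h2
    · rfl
  · -- marginal
    intro i xi
    have hgw : ∀ ι, ¬ ((∃ i, (ι i).isSome) ∧ (supp 𝒳 ι).card ≤ L) →
        wOf 𝒳 L π ι = 0 := by
      intro ι h
      rw [wOf, if_neg]
      rintro ⟨hne, hcard⟩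
      exact h ⟨(supp_nonempty 𝒳).mp hne, hcard⟩
    rw [marginal_master 𝒳 L i xi (wOf 𝒳 L π) hgw, ← hπmarg i xi]
    refine Finset.sum_congr rfl fun A hA => ?_
    rw [Finset.mem_filter] at hA
    obtain ⟨-, hne, hcard, hi⟩ := hA
    rw [marg, dif_pos hi]
    refine Finset.sum_congr rfl fun x _ => ?_
    have hcond : A.Nonempty ∧ A.card ≤ L := ⟨hne, hcard⟩
    rw [wOf_toι, if_pos hcond]
    simp only [toι_eq_some 𝒳 hi]
  · -- objective
    have hsum : ∑ ι, wOf 𝒳 L π ι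
        = ∑ A ∈ Finset.univ.filter
            (fun A : Finset (Fin K) => A.Nonempty ∧ A.card ≤ L),
            ∑ x : (j : A) → ↥(𝒳 j.1), π A x := by
      rw [sum_pi_option 𝒳 (wOf 𝒳 L π), Finset.sum_filter]
      refine Finset.sum_congr rfl fun A _ => ?_
      by_cases hA : A.Nonempty ∧ A.card ≤ L
      · rw [if_pos hA]
        refine Finset.sum_congr rfl fun x _ => ?_
        rw [wOf_toι, if_pos hA]
      · rw [if_neg hA]
        refine Finset.sum_eq_zero fun x _ => ?_
        rw [wOf_toι, if_neg hA]
    rw [hsum]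
    rw [ENNReal.ofReal_sum_of_nonneg
      (fun A _ => Finset.sum_nonneg fun x _ => hπ0 A x)]
    refine Finset.sum_congr rfl fun A hA => ?_
    rw [ENNReal.ofReal_sum_of_nonneg (fun x _ => hπ0 A x)]
    refine Finset.sum_congr rfl fun x _ => ?_
    by_cases hc : cepsA ε 𝒳 A x = 0
    · rw [hc, add_zero, one_mul]
    · have hctop : cepsA ε 𝒳 A x = ⊤ := by
        by_cases hex : ∃ x' : E, ∀ j : A, ‖x' - (x j : E)‖ ≤ ε
        · exact absurd (cepsA_eq_zero 𝒳 hex) hc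
        · exact cepsA_eq_top 𝒳 hex
      have hπz : π A x = 0 := key A hA x hctop
      simp [hπz]


end Aux

/-- for every `1 ≤ L ≤ K`, the truncated stratified MOT value `M(L)`
equals the value of the truncated linear program (for `L = K`, the untruncated
problems are equivalent). -/
theorem stmt2 (ε : ℝ) (hε : 0 < ε) (𝒳 : Fin K → Finset E)
    (h𝒳 : ∀ i, (𝒳 i).Nonempty) (μ : (i : Fin K) → E → ℝ)
    (hμpos : ∀ i, ∀ x ∈ 𝒳 i, 0 < μ i x)
    (hmass : ∑ i : Fin K, ∑ x ∈ 𝒳 i, μ i x = 1)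
    (L : ℕ) (hL : 1 ≤ L) (hLK : L ≤ K) :
    Mval ε 𝒳 μ L = LPval ε 𝒳 μ L :=
  le_antisymm (dir1 𝒳 ε μ L) (dir2 𝒳 ε μ hμpos hmass L)

end Stmt2

end
end

section
/- For every family of couplings {π_A}_{A∈S_K^L} and every family of strictly positive vectors μ = (μ₁,…,μ_K), there exists a family of couplings {π̂_A}_{A∈S_K^L} (the output of the rounding scheme) such that: (i) for every i ∈ {1,…,K}, Σ_{A∈S_K^L(i)} Pᵢ#π̂_A = μᵢ exactly; and (ii) Σ_{A∈S_K^L} ‖π̂_A − π_A‖₁ ≤ L · Σ_{i=1}^K ‖Σ_{A∈S_K^L(i)} Pᵢ#π_A − μᵢ‖₁. Moreover π̂_A(x_A) > 0 only if π_A(x_A) > 0 except possibly on singleton sets A = {i}. -/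
open scoped ENNReal BigOperators

noncomputable section

/-- `S_K^L`: the nonempty subsets of `{1,…,K}` of size at most `L`. -/
def SKL (K L : ℕ) : Finset (Finset (Fin K)) :=
  Finset.univ.filter fun A => A.Nonempty ∧ A.card ≤ L

/-- `S_K^L(i)`: the members of `S_K^L` containing `i`. -/
def SKLi (K L : ℕ) (i : Fin K) : Finset (Finset (Fin K)) :=
  (SKL K L).filter fun A => i ∈ A

variable {K : ℕ} (𝒳 : Fin K → Type*) [∀ i, Fintype (𝒳 i)] [∀ i, DecidableEq (𝒳 i)]

/-- The `i`-th marginal `Pᵢ#π_A` of a coupling `π_A` on `𝒳^A`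
(zero when `i ∉ A`). -/
def marg (A : Finset (Fin K)) (π : ((j : A) → 𝒳 j.1) → ℝ) (i : Fin K) (xi : 𝒳 i) : ℝ :=
  if hi : i ∈ A then
    ∑ x : (j : A) → 𝒳 j.1, (if x ⟨i, hi⟩ = xi then π x else 0)
  else 0

/-- `Σ_{A ∈ S_K^L(i)} Pᵢ#π_A`, evaluated at `xi`. -/
def totMarg (L : ℕ) (π : (A : Finset (Fin K)) → ((j : A) → 𝒳 j.1) → ℝ)
    (i : Fin K) (xi : 𝒳 i) : ℝ :=
  ∑ A ∈ SKLi K L i, marg 𝒳 A (π A) i xi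

/-- The couplings `π_A(g)` induced by potentials `g`, interpreted as `0` where the
cost is `+∞`. -/
def piInd (η : ℝ) (c : (A : Finset (Fin K)) → ((j : A) → 𝒳 j.1) → ℝ≥0∞)
    (g : (i : Fin K) → 𝒳 i → ℝ) (A : Finset (Fin K)) (x : (j : A) → 𝒳 j.1) : ℝ :=
  if c A x = ⊤ then 0
  else Real.exp ((∑ j : A, g j.1 (x j) - (1 + (c A x).toReal)) / η)

/-- The dual objective `𝒢^L`. -/
def dualObj (η : ℝ) (L : ℕ) (c : (A : Finset (Fin K)) → ((j : A) → 𝒳 j.1) → ℝ≥0∞)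
    (μ : (i : Fin K) → 𝒳 i → ℝ) (g : (i : Fin K) → 𝒳 i → ℝ) : ℝ :=
  (∑ A ∈ SKL K L, ∑ x : (j : A) → 𝒳 j.1, piInd 𝒳 η c g A x)
    - (1 / η) * ∑ i : Fin K, ∑ xi : 𝒳 i, g i xi * μ i xi

/-- Unnormalized Kullback–Leibler divergence (convention `0 · log 0 = 0`). -/
def KLdiv {Z : Type*} [Fintype Z] (α β : Z → ℝ) : ℝ :=
  (∑ z, (β z - α z)) + ∑ z, α z * Real.log (α z / β z)

/-- ℓ¹ norm of a vector on a finite set. -/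
def l1 {Z : Type*} [Fintype Z] (v : Z → ℝ) : ℝ := ∑ z, |v z|

/-- `g : ℕ → potentials` is generated by the greedy Sinkhorn iteration: `g⁰ = 0`,
and at each step a coordinate `I` maximizing the KL-discrepancy of the `I`-th
marginal is updated by the Sinkhorn formula, all others kept fixed. -/
def IsGreedySinkhorn (η : ℝ) (L : ℕ)
    (c : (A : Finset (Fin K)) → ((j : A) → 𝒳 j.1) → ℝ≥0∞)
    (μ : (i : Fin K) → 𝒳 i → ℝ) (g : ℕ → (i : Fin K) → 𝒳 i → ℝ) : Prop :=
  (∀ i xi, g 0 i xi = 0) ∧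
  ∀ t : ℕ, ∃ I : Fin K,
    (∀ i : Fin K,
      KLdiv (μ i) (totMarg 𝒳 L (piInd 𝒳 η c (g t)) i) ≤
        KLdiv (μ I) (totMarg 𝒳 L (piInd 𝒳 η c (g t)) I)) ∧
    (∀ xI : 𝒳 I, g (t + 1) I xI =
      g t I xI + η * Real.log (μ I xI)
        - η * Real.log (totMarg 𝒳 L (piInd 𝒳 η c (g t)) I xI)) ∧
    (∀ i : Fin K, i ≠ I → g (t + 1) i = g t i)

/-- The marginal error `E_t` of the greedy Sinkhorn iteration. -/
def Err (η : ℝ) (L : ℕ) (c : (A : Finset (Fin K)) → ((j : A) → 𝒳 j.1) → ℝ≥0∞)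
    (μ : (i : Fin K) → 𝒳 i → ℝ) (g : ℕ → (i : Fin K) → 𝒳 i → ℝ) (t : ℕ) : ℝ :=
  ∑ i : Fin K,
    l1 (fun xi : 𝒳 i => μ i xi - totMarg 𝒳 L (piInd 𝒳 η c (g t)) i xi)

/-- `C* := maxᵢ nᵢ / n`. -/
def Cstar (n : ℝ) : ℝ := ((Finset.univ.sup fun i : Fin K => Fintype.card (𝒳 i) : ℕ) : ℝ) / n

/-- `min_{j, y} μ_j(y)`. -/
def muMin (μ : (i : Fin K) → 𝒳 i → ℝ) : ℝ :=
  sInf {v : ℝ | ∃ (j : Fin K) (y : 𝒳 j), v = μ j y}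

/-- `R̄ := L − η log min_{j,y} μ_j(y) + η L log(K C* n)`. -/
def Rbar (η : ℝ) (L : ℕ) (n : ℝ) (μ : (i : Fin K) → 𝒳 i → ℝ) : ℝ :=
  (L : ℝ) - η * Real.log (muMin 𝒳 μ) + η * L * Real.log (K * Cstar 𝒳 n * n)


/-! ### Auxiliary material for `stmt4` -/

lemma aux_one_sub_prod_le {ι : Type*} (s : Finset ι) (u : ι → ℝ)
    (h0 : ∀ j ∈ s, 0 ≤ u j) (h1 : ∀ j ∈ s, u j ≤ 1) :
    1 - ∏ j ∈ s, u j ≤ ∑ j ∈ s, (1 - u j) := by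
  classical
  induction s using Finset.cons_induction with
  | empty => simp
  | cons a s ha ih =>
    rw [Finset.prod_cons, Finset.sum_cons]
    have hp0 : (0:ℝ) ≤ ∏ j ∈ s, u j :=
      Finset.prod_nonneg fun j hj => h0 j (Finset.mem_cons_of_mem hj)
    have hp1 : ∏ j ∈ s, u j ≤ 1 :=
      Finset.prod_le_one (fun j hj => h0 j (Finset.mem_cons_of_mem hj))
        (fun j hj => h1 j (Finset.mem_cons_of_mem hj))
    have hih := ih (fun j hj => h0 j (Finset.mem_cons_of_mem hj))
      (fun j hj => h1 j (Finset.mem_cons_of_mem hj))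
    have ha0 := h0 a (Finset.mem_cons_self a s)
    have ha1 := h1 a (Finset.mem_cons_self a s)
    nlinarith

lemma aux_coeff {ι : Type*} [DecidableEq ι] (s : Finset ι) (u : ι → ℝ)
    (h0 : ∀ j ∈ s, 0 ≤ u j) (h1 : ∀ j ∈ s, u j ≤ 1) :
    (1 - ∏ j ∈ s, u j) + ∑ i ∈ s, (u i - ∏ j ∈ s, u j)
      ≤ (s.card : ℝ) * ∑ j ∈ s, (1 - u j) := by
  have hstep : ∀ i ∈ s, u i - ∏ j ∈ s, u j ≤ (∑ j ∈ s, (1 - u j)) - (1 - u i) := by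
    intro i hi
    rw [← Finset.sum_erase_eq_sub hi]
    have hq := aux_one_sub_prod_le (s.erase i) u
      (fun j hj => h0 j (Finset.mem_of_mem_erase hj))
      (fun j hj => h1 j (Finset.mem_of_mem_erase hj))
    have hpe : u i * ∏ j ∈ s.erase i, u j = ∏ j ∈ s, u j :=
      Finset.mul_prod_erase s u hi
    have hq0 : (0:ℝ) ≤ ∏ j ∈ s.erase i, u j :=
      Finset.prod_nonneg fun j hj => h0 j (Finset.mem_of_mem_erase hj)
    have hq1 : ∏ j ∈ s.erase i, u j ≤ 1 :=
      Finset.prod_le_one (fun j hj => h0 j (Finset.mem_of_mem_erase hj))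
        (fun j hj => h1 j (Finset.mem_of_mem_erase hj))
    nlinarith [h0 i hi, h1 i hi]
  have h2 : ∑ i ∈ s, (u i - ∏ j ∈ s, u j)
      ≤ ∑ i ∈ s, ((∑ j ∈ s, (1 - u j)) - (1 - u i)) := Finset.sum_le_sum hstep
  have h3 : ∑ i ∈ s, ((∑ j ∈ s, (1 - u j)) - (1 - u i))
      = (s.card : ℝ) * ∑ j ∈ s, (1 - u j) - ∑ j ∈ s, (1 - u j) := by
    rw [Finset.sum_sub_distrib, Finset.sum_const, nsmul_eq_mul]
  have h4 := aux_one_sub_prod_le s u h0 h1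
  linarith

lemma aux_abs_term (μ m p H G f : ℝ) (hp : 0 ≤ p) (hH : 0 ≤ H) (hm : m = p + H)
    (hG : G ≤ f * H) (hf1 : f ≤ 1)
    (hcase : (m ≤ μ ∧ f = 1) ∨ (f * m = μ ∧ μ < m)) :
    |μ - G - p| ≤ max (μ - m) 0 + (1 - f) * p + (f * H - G) := by
  rcases hcase with ⟨hmu, hf⟩ | ⟨hfm, hmu⟩
  · subst hf
    rw [abs_of_nonneg (by nlinarith), max_eq_left (by linarith)]
    linarith
  · rw [max_eq_right (by linarith)]
    have h1 : (0:ℝ) ≤ (1 - f) * p := mul_nonneg (by linarith) hp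
    have h2 : μ - G - p = -((1 - f) * p) + (f * H - G) := by nlinarith
    rw [h2]
    have := abs_add_le (-((1 - f) * p)) (f * H - G)
    have h3 : |(-((1 - f) * p))| = (1 - f) * p := by rw [abs_neg, abs_of_nonneg h1]
    have h4 : |f * H - G| = f * H - G := abs_of_nonneg (by linarith)
    calc |(-((1 - f) * p)) + (f * H - G)| ≤ |(-((1 - f) * p))| + |f * H - G| := abs_add_le _ _
      _ = 0 + (1 - f) * p + (f * H - G) := by rw [h3, h4]; ring

lemma aux_abs_split (a b : ℝ) : |a - b| = max (a - b) 0 + max (b - a) 0 := by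
  rcases le_total a b with h | h
  · rw [abs_of_nonpos (by linarith), max_eq_right (by linarith), max_eq_left (by linarith)]
    ring
  · rw [abs_of_nonneg (by linarith), max_eq_left (by linarith), max_eq_right (by linarith)]
    ring

lemma aux_final_pt (Lr μ m p H f : ℝ) (hp : 0 ≤ p) (hH : 0 ≤ H) (hm : m = p + H)
    (hf0 : 0 ≤ f) (hf1 : f ≤ 1) (hfm : (1 - f) * m = max (m - μ) 0) (hL : 1 ≤ Lr) :
    max (μ - m) 0 + (1 - f) * p + Lr * ((1 - f) * H) ≤ Lr * |m - μ| := by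
  have h1 : (1 - f) * p ≤ Lr * ((1 - f) * p) :=
    le_mul_of_one_le_left (mul_nonneg (by linarith) hp) hL
  have h2 : Lr * ((1 - f) * p) + Lr * ((1 - f) * H) = Lr * max (m - μ) 0 := by
    rw [← mul_add, ← mul_add, ← hfm, hm]
  have h3 : max (μ - m) 0 ≤ Lr * max (μ - m) 0 :=
    le_mul_of_one_le_left (le_max_right _ _) hL
  have h4 : |m - μ| = max (m - μ) 0 + max (μ - m) 0 := aux_abs_split m μ
  nlinarith [le_max_right (m - μ) 0, le_max_right (μ - m) 0]

section StmtFourAux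

variable (L : ℕ) (π : (A : Finset (Fin K)) → ((j : A) → 𝒳 j.1) → ℝ)
  (μ : (i : Fin K) → 𝒳 i → ℝ)

/-- characteristic point of the singleton product space -/
def singFun (i : Fin K) (xi : 𝒳 i) : (j : ({i} : Finset (Fin K))) → 𝒳 j.1 :=
  fun j => cast (congrArg 𝒳 (Finset.mem_singleton.mp j.2).symm) xi

lemma singFun_self (i : Fin K) (xi : 𝒳 i) (h : i ∈ ({i} : Finset (Fin K))) :
    singFun 𝒳 i xi ⟨i, h⟩ = xi := rfl

lemma singFun_bijective (i : Fin K) : Function.Bijective (singFun 𝒳 i) := by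
  rw [Function.bijective_iff_has_inverse]
  refine ⟨fun x => x ⟨i, Finset.mem_singleton_self i⟩, fun xi => rfl, fun x => ?_⟩
  funext j
  rcases j with ⟨j, hj⟩
  have hji : j = i := Finset.mem_singleton.mp hj
  subst hji
  rfl

lemma sum_singleton_pi (i : Fin K) (F : ((j : ({i} : Finset (Fin K))) → 𝒳 j.1) → ℝ) :
    ∑ x : (j : ({i} : Finset (Fin K))) → 𝒳 j.1, F x = ∑ xi : 𝒳 i, F (singFun 𝒳 i xi) :=
  (Fintype.sum_bijective (singFun 𝒳 i) (singFun_bijective 𝒳 i)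
    (fun xi => F (singFun 𝒳 i xi)) F (fun _ => rfl)).symm

lemma sum_coe_singleton (i : Fin K) (F : ({i} : Finset (Fin K)) → ℝ) :
    ∑ j : ({i} : Finset (Fin K)), F j = F ⟨i, Finset.mem_singleton_self i⟩ := by
  apply Fintype.sum_eq_single
  intro j hj
  exact absurd (Subtype.ext (Finset.mem_singleton.mp j.2)) hj

lemma marg_singleton (i : Fin K) (q : ((j : ({i} : Finset (Fin K))) → 𝒳 j.1) → ℝ)
    (xi : 𝒳 i) : marg 𝒳 {i} q i xi = q (singFun 𝒳 i xi) := by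
  unfold marg
  rw [dif_pos (Finset.mem_singleton_self i)]
  rw [sum_singleton_pi 𝒳 i (fun x => if x ⟨i, Finset.mem_singleton_self i⟩ = xi then q x else 0)]
  simp only [singFun_self]
  refine (Finset.sum_ite_eq' Finset.univ xi (fun yi => q (singFun 𝒳 i yi))).trans ?_
  simp

lemma l1_singleton_pi (i : Fin K) (F : ((j : ({i} : Finset (Fin K))) → 𝒳 j.1) → ℝ) :
    l1 F = ∑ xi : 𝒳 i, |F (singFun 𝒳 i xi)| := by
  unfold l1
  exact sum_singleton_pi 𝒳 i (fun x => |F x|)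

lemma marg_nonneg (A : Finset (Fin K)) (q : ((j : A) → 𝒳 j.1) → ℝ)
    (hq : ∀ x, 0 ≤ q x) (i : Fin K) (xi : 𝒳 i) : 0 ≤ marg 𝒳 A q i xi := by
  unfold marg
  split
  · exact Finset.sum_nonneg fun x _ => by split <;> simp [hq x]
  · exact le_refl 0

lemma totMarg_nonneg (hπ : ∀ A x, 0 ≤ π A x) (i : Fin K) (xi : 𝒳 i) :
    0 ≤ totMarg 𝒳 L π i xi :=
  Finset.sum_nonneg fun A _ => marg_nonneg 𝒳 A (π A) (hπ A) i xi

lemma marg_weight (A : Finset (Fin K)) (q : ((j : A) → 𝒳 j.1) → ℝ) (i : Fin K)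
    (hi : i ∈ A) (g : 𝒳 i → ℝ) :
    ∑ xi : 𝒳 i, g xi * marg 𝒳 A q i xi
      = ∑ x : (j : A) → 𝒳 j.1, g (x ⟨i, hi⟩) * q x := by
  unfold marg
  simp only [dif_pos hi, Finset.mul_sum]
  rw [Finset.sum_comm]
  refine Finset.sum_congr rfl fun x _ => ?_
  simp only [mul_ite, mul_zero]
  rw [Finset.sum_ite_eq Finset.univ (x ⟨i, hi⟩) (fun yi => g yi * q x)]
  simp

lemma marg_mass (A : Finset (Fin K)) (q : ((j : A) → 𝒳 j.1) → ℝ) (i : Fin K)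
    (hi : i ∈ A) :
    ∑ xi : 𝒳 i, marg 𝒳 A q i xi = ∑ x : (j : A) → 𝒳 j.1, q x := by
  have := marg_weight 𝒳 A q i hi (fun _ => 1)
  simpa using this

/-- The damping factor of the rounding scheme. -/
def rf (i : Fin K) (xi : 𝒳 i) : ℝ :=
  if totMarg 𝒳 L π i xi ≤ μ i xi then 1 else μ i xi / totMarg 𝒳 L π i xi

lemma rf_nonneg (hμ : ∀ i xi, 0 < μ i xi) (i : Fin K) (xi : 𝒳 i) :
    0 ≤ rf 𝒳 L π μ i xi := by
  unfold rf
  split_ifs with h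
  · norm_num
  · push_neg at h
    exact div_nonneg (hμ i xi).le (by linarith [hμ i xi])

lemma rf_le_one (hμ : ∀ i xi, 0 < μ i xi) (i : Fin K) (xi : 𝒳 i) :
    rf 𝒳 L π μ i xi ≤ 1 := by
  unfold rf
  split_ifs with h
  · exact le_refl 1
  · push_neg at h
    exact le_of_lt ((div_lt_one (by linarith [hμ i xi])).mpr h)

lemma rf_mul_le (hμ : ∀ i xi, 0 < μ i xi) (i : Fin K) (xi : 𝒳 i) :
    rf 𝒳 L π μ i xi * totMarg 𝒳 L π i xi ≤ μ i xi := by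
  unfold rf
  split_ifs with h
  · simpa using h
  · push_neg at h
    rw [div_mul_cancel₀ _ (by nlinarith [hμ i xi] : totMarg 𝒳 L π i xi ≠ 0)]

lemma one_sub_rf_mul (hμ : ∀ i xi, 0 < μ i xi) (i : Fin K) (xi : 𝒳 i) :
    (1 - rf 𝒳 L π μ i xi) * totMarg 𝒳 L π i xi
      = max (totMarg 𝒳 L π i xi - μ i xi) 0 := by
  unfold rf
  split_ifs with h
  · rw [max_eq_right (by linarith)]; ring
  · push_neg at h
    have hm : (0:ℝ) < totMarg 𝒳 L π i xi := lt_trans (hμ i xi) h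
    rw [max_eq_left (by linarith)]
    field_simp

/-- The damped couplings. -/
def pit (A : Finset (Fin K)) (x : (j : A) → 𝒳 j.1) : ℝ :=
  π A x * ∏ j : A, rf 𝒳 L π μ j.1 (x j)

lemma pit_nonneg (hπ : ∀ A x, 0 ≤ π A x) (hμ : ∀ i xi, 0 < μ i xi)
    (A : Finset (Fin K)) (x : (j : A) → 𝒳 j.1) : 0 ≤ pit 𝒳 L π μ A x :=
  mul_nonneg (hπ A x) (Finset.prod_nonneg fun j _ => rf_nonneg 𝒳 L π μ hμ j.1 (x j))

lemma pit_le (hπ : ∀ A x, 0 ≤ π A x) (hμ : ∀ i xi, 0 < μ i xi)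
    (A : Finset (Fin K)) (x : (j : A) → 𝒳 j.1) : pit 𝒳 L π μ A x ≤ π A x := by
  have : ∏ j : A, rf 𝒳 L π μ j.1 (x j) ≤ 1 :=
    Finset.prod_le_one (fun j _ => rf_nonneg 𝒳 L π μ hμ j.1 (x j))
      (fun j _ => rf_le_one 𝒳 L π μ hμ j.1 (x j))
  calc pit 𝒳 L π μ A x ≤ π A x * 1 :=
        mul_le_mul_of_nonneg_left this (hπ A x)
    _ = π A x := mul_one _

lemma marg_pit_le (hπ : ∀ A x, 0 ≤ π A x) (hμ : ∀ i xi, 0 < μ i xi)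
    (B : Finset (Fin K)) (i : Fin K) (hi : i ∈ B) (xi : 𝒳 i) :
    marg 𝒳 B (pit 𝒳 L π μ B) i xi ≤ rf 𝒳 L π μ i xi * marg 𝒳 B (π B) i xi := by
  unfold marg
  simp only [dif_pos hi, Finset.mul_sum]
  refine Finset.sum_le_sum fun x _ => ?_
  split_ifs with h
  · have hprod : ∏ j : B, rf 𝒳 L π μ j.1 (x j) ≤ rf 𝒳 L π μ i xi := by
      have hmem : (⟨i, hi⟩ : B) ∈ (Finset.univ : Finset B) := Finset.mem_univ _
      have := Finset.mul_prod_erase Finset.univ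
        (fun j : B => rf 𝒳 L π μ j.1 (x j)) hmem
      have herase : ∏ j ∈ (Finset.univ : Finset B).erase ⟨i, hi⟩,
          rf 𝒳 L π μ j.1 (x j) ≤ 1 :=
        Finset.prod_le_one (fun j _ => rf_nonneg 𝒳 L π μ hμ j.1 (x j))
          (fun j _ => rf_le_one 𝒳 L π μ hμ j.1 (x j))
      have h0 : 0 ≤ rf 𝒳 L π μ i (x ⟨i, hi⟩) := rf_nonneg 𝒳 L π μ hμ i _
      calc ∏ j : B, rf 𝒳 L π μ j.1 (x j)
          = rf 𝒳 L π μ i (x ⟨i, hi⟩) * ∏ j ∈ (Finset.univ : Finset B).erase ⟨i, hi⟩,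
              rf 𝒳 L π μ j.1 (x j) := this.symm
        _ ≤ rf 𝒳 L π μ i (x ⟨i, hi⟩) * 1 := mul_le_mul_of_nonneg_left herase h0
        _ = rf 𝒳 L π μ i xi := by rw [mul_one, h]
    calc pit 𝒳 L π μ B x ≤ π B x * rf 𝒳 L π μ i xi :=
          mul_le_mul_of_nonneg_left hprod (hπ B x)
      _ = rf 𝒳 L π μ i xi * π B x := mul_comm _ _
  · simp

/-- Nonsingleton members of `S_K^L` containing `i`. -/
def nsSKLi (i : Fin K) : Finset (Finset (Fin K)) :=
  (SKL K L).filter fun B => i ∈ B ∧ B.card ≠ 1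

/-- Total damped marginal over nonsingleton sets. -/
def GG (i : Fin K) (xi : 𝒳 i) : ℝ :=
  ∑ B ∈ nsSKLi L i, marg 𝒳 B (pit 𝒳 L π μ B) i xi

/-- Total raw marginal over nonsingleton sets. -/
def HH (i : Fin K) (xi : 𝒳 i) : ℝ :=
  ∑ B ∈ nsSKLi L i, marg 𝒳 B (π B) i xi

/-- The rounded couplings. -/
def phat (A : Finset (Fin K)) (x : (j : A) → 𝒳 j.1) : ℝ :=
  if A.card = 1 then ∑ j : A, (μ j.1 (x j) - GG 𝒳 L π μ j.1 (x j))
  else pit 𝒳 L π μ A x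

lemma singleton_mem_SKL (hL : 1 ≤ L) (i : Fin K) : ({i} : Finset (Fin K)) ∈ SKL K L := by
  simp [SKL, hL]

lemma SKLi_filter_card_one (hL : 1 ≤ L) (i : Fin K) :
    (SKLi K L i).filter (fun B => B.card = 1) = {({i} : Finset (Fin K))} := by
  ext B
  simp only [SKLi, SKL, Finset.mem_filter, Finset.mem_univ, true_and,
    Finset.mem_singleton]
  constructor
  · rintro ⟨⟨⟨hne, hcard⟩, hiB⟩, hc1⟩
    obtain ⟨a, rfl⟩ := Finset.card_eq_one.mp hc1
    rw [Finset.mem_singleton] at hiB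
    rw [hiB]
  · rintro rfl
    exact ⟨⟨⟨Finset.singleton_nonempty i, by simpa using hL⟩,
      Finset.mem_singleton_self i⟩, Finset.card_singleton i⟩

lemma SKLi_filter_card_ne_one (i : Fin K) :
    (SKLi K L i).filter (fun B => ¬ B.card = 1) = nsSKLi L i := by
  ext B
  simp only [SKLi, nsSKLi, Finset.mem_filter, ne_eq]
  tauto

lemma totMarg_split (hL : 1 ≤ L)
    (q : (A : Finset (Fin K)) → ((j : A) → 𝒳 j.1) → ℝ) (i : Fin K) (xi : 𝒳 i) :
    totMarg 𝒳 L q i xi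
      = marg 𝒳 {i} (q {i}) i xi + ∑ B ∈ nsSKLi L i, marg 𝒳 B (q B) i xi := by
  unfold totMarg
  rw [← Finset.sum_filter_add_sum_filter_not (SKLi K L i) (fun B => B.card = 1)]
  rw [SKLi_filter_card_one L hL i, Finset.sum_singleton, SKLi_filter_card_ne_one]

lemma HH_nonneg (hπ : ∀ A x, 0 ≤ π A x) (i : Fin K) (xi : 𝒳 i) :
    0 ≤ HH 𝒳 L π i xi :=
  Finset.sum_nonneg fun B _ => marg_nonneg 𝒳 B (π B) (hπ B) i xi

lemma GG_le (hπ : ∀ A x, 0 ≤ π A x) (hμ : ∀ i xi, 0 < μ i xi) (i : Fin K) (xi : 𝒳 i) :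
    GG 𝒳 L π μ i xi ≤ rf 𝒳 L π μ i xi * HH 𝒳 L π i xi := by
  rw [GG, HH, Finset.mul_sum]
  refine Finset.sum_le_sum fun B hB => ?_
  have hiB : i ∈ B := ((Finset.mem_filter.mp hB).2).1
  exact marg_pit_le 𝒳 L π μ hπ hμ B i hiB xi

lemma GG_le_mu (hL : 1 ≤ L) (hπ : ∀ A x, 0 ≤ π A x) (hμ : ∀ i xi, 0 < μ i xi)
    (i : Fin K) (xi : 𝒳 i) : GG 𝒳 L π μ i xi ≤ μ i xi := by
  have h1 := GG_le 𝒳 L π μ hπ hμ i xi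
  have h2 : HH 𝒳 L π i xi ≤ totMarg 𝒳 L π i xi := by
    rw [totMarg_split 𝒳 L hL π i xi]
    unfold HH
    have := marg_nonneg 𝒳 {i} (π {i}) (hπ {i}) i xi
    linarith
  have h3 := rf_nonneg 𝒳 L π μ hμ i xi
  have h4 := rf_mul_le 𝒳 L π μ hμ i xi
  nlinarith

lemma sum_nsSKLi_comm (h : (i : Fin K) → Finset (Fin K) → ℝ) :
    ∑ i : Fin K, ∑ B ∈ nsSKLi L i, h i B
      = ∑ B ∈ (SKL K L).filter (fun B => B.card ≠ 1), ∑ i ∈ B, h i B := by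
  have e : ∀ i : Fin K, nsSKLi L i
      = ((SKL K L).filter (fun B => B.card ≠ 1)).filter (fun B => i ∈ B) := by
    intro i
    ext B
    simp only [nsSKLi, Finset.mem_filter, ne_eq]
    tauto
  simp_rw [e, Finset.sum_filter]
  rw [Finset.sum_comm]
  refine Finset.sum_congr rfl fun B _ => ?_
  by_cases hB : B.card ≠ 1 <;> simp [hB, Finset.sum_ite_mem, Finset.univ_inter]

lemma SKL_filter_card_one (hL : 1 ≤ L) :
    (SKL K L).filter (fun A => A.card = 1)
      = Finset.image (fun i : Fin K => ({i} : Finset (Fin K))) Finset.univ := by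
  ext B
  simp only [SKL, Finset.mem_filter, Finset.mem_univ, true_and, Finset.mem_image]
  constructor
  · rintro ⟨_, hc1⟩
    obtain ⟨a, rfl⟩ := Finset.card_eq_one.mp hc1
    exact ⟨a, rfl⟩
  · rintro ⟨a, -, rfl⟩
    exact ⟨⟨Finset.singleton_nonempty a, by simpa using hL⟩, Finset.card_singleton a⟩

lemma perB (hπ : ∀ A x, 0 ≤ π A x) (hμ : ∀ i xi, 0 < μ i xi)
    (B : Finset (Fin K)) (hBL : B.card ≤ L) :
    (∑ x : (j : B) → 𝒳 j.1, (π B x - pit 𝒳 L π μ B x))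
      + ∑ i ∈ B, ((∑ xi : 𝒳 i, rf 𝒳 L π μ i xi * marg 𝒳 B (π B) i xi)
          - ∑ xi : 𝒳 i, marg 𝒳 B (pit 𝒳 L π μ B) i xi)
      ≤ (L : ℝ) * ∑ i ∈ B, ∑ xi : 𝒳 i, (1 - rf 𝒳 L π μ i xi) * marg 𝒳 B (π B) i xi := by
  rw [← Finset.sum_attach B (fun i => (∑ xi : 𝒳 i, rf 𝒳 L π μ i xi * marg 𝒳 B (π B) i xi)
        - ∑ xi : 𝒳 i, marg 𝒳 B (pit 𝒳 L π μ B) i xi),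
      ← Finset.sum_attach B (fun i => ∑ xi : 𝒳 i, (1 - rf 𝒳 L π μ i xi) * marg 𝒳 B (π B) i xi)]
  have e1 : ∀ i : B, ∑ xi : 𝒳 i.1, rf 𝒳 L π μ i.1 xi * marg 𝒳 B (π B) i.1 xi
      = ∑ x : (j : B) → 𝒳 j.1, rf 𝒳 L π μ i.1 (x i) * π B x := fun i =>
    marg_weight 𝒳 B (π B) i.1 i.2 (rf 𝒳 L π μ i.1)
  have e2 : ∀ i : B, ∑ xi : 𝒳 i.1, marg 𝒳 B (pit 𝒳 L π μ B) i.1 xi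
      = ∑ x : (j : B) → 𝒳 j.1, pit 𝒳 L π μ B x := fun i =>
    marg_mass 𝒳 B (pit 𝒳 L π μ B) i.1 i.2
  have e3 : ∀ i : B, ∑ xi : 𝒳 i.1, (1 - rf 𝒳 L π μ i.1 xi) * marg 𝒳 B (π B) i.1 xi
      = ∑ x : (j : B) → 𝒳 j.1, (1 - rf 𝒳 L π μ i.1 (x i)) * π B x := fun i =>
    marg_weight 𝒳 B (π B) i.1 i.2 (fun xi => 1 - rf 𝒳 L π μ i.1 xi)
  calc (∑ x : (j : B) → 𝒳 j.1, (π B x - pit 𝒳 L π μ B x))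
        + ∑ i ∈ B.attach, ((∑ xi : 𝒳 i.1, rf 𝒳 L π μ i.1 xi * marg 𝒳 B (π B) i.1 xi)
            - ∑ xi : 𝒳 i.1, marg 𝒳 B (pit 𝒳 L π μ B) i.1 xi)
      = ∑ x : (j : B) → 𝒳 j.1, ((π B x - pit 𝒳 L π μ B x)
          + ∑ i ∈ B.attach, (rf 𝒳 L π μ i.1 (x i) * π B x - pit 𝒳 L π μ B x)) := by
        rw [Finset.sum_add_distrib]
        congr 1
        rw [Finset.sum_comm]
        refine Finset.sum_congr rfl fun i _ => ?_
        rw [e1 i, e2 i, Finset.sum_sub_distrib]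
    _ ≤ ∑ x : (j : B) → 𝒳 j.1,
          ((L : ℝ) * ∑ i ∈ B.attach, (1 - rf 𝒳 L π μ i.1 (x i)) * π B x) := by
        refine Finset.sum_le_sum fun x _ => ?_
        set u : B → ℝ := fun j => rf 𝒳 L π μ j.1 (x j) with hu
        have h0 : ∀ j ∈ B.attach, 0 ≤ u j := fun j _ => rf_nonneg 𝒳 L π μ hμ j.1 (x j)
        have h1 : ∀ j ∈ B.attach, u j ≤ 1 := fun j _ => rf_le_one 𝒳 L π μ hμ j.1 (x j)
        have key := aux_coeff B.attach u h0 h1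
        have hπx := hπ B x
        have hS : 0 ≤ ∑ j ∈ B.attach, (1 - u j) :=
          Finset.sum_nonneg fun j hj => by linarith [h1 j hj]
        have hcard : ((B.attach.card : ℕ) : ℝ) ≤ (L : ℝ) := by
          rw [Finset.card_attach]; exact_mod_cast hBL
        have hpit : pit 𝒳 L π μ B x = π B x * ∏ j ∈ B.attach, u j := by
          rw [pit, ← Finset.univ_eq_attach]
        rw [hpit]
        have lhs_eq : (π B x - π B x * ∏ j ∈ B.attach, u j)
            + ∑ i ∈ B.attach, (u i * π B x - π B x * ∏ j ∈ B.attach, u j)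
            = ((1 - ∏ j ∈ B.attach, u j) + ∑ i ∈ B.attach, (u i - ∏ j ∈ B.attach, u j))
                * π B x := by
          rw [add_mul, Finset.sum_mul]
          congr 1
          · ring
          · exact Finset.sum_congr rfl fun i _ => by ring
        rw [lhs_eq]
        have rhs_eq : (L : ℝ) * ∑ i ∈ B.attach, (1 - u i) * π B x
            = ((L : ℝ) * ∑ i ∈ B.attach, (1 - u i)) * π B x := by
          rw [← Finset.sum_mul, mul_assoc]
        rw [rhs_eq]
        refine mul_le_mul_of_nonneg_right ?_ hπx
        calc (1 - ∏ j ∈ B.attach, u j) + ∑ i ∈ B.attach, (u i - ∏ j ∈ B.attach, u j)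
            ≤ ((B.attach.card : ℕ) : ℝ) * ∑ j ∈ B.attach, (1 - u j) := key
          _ ≤ (L : ℝ) * ∑ j ∈ B.attach, (1 - u j) :=
              mul_le_mul_of_nonneg_right hcard hS
    _ = (L : ℝ) * ∑ i ∈ B.attach, ∑ xi : 𝒳 i.1, (1 - rf 𝒳 L π μ i.1 xi)
          * marg 𝒳 B (π B) i.1 xi := by
        rw [← Finset.mul_sum]
        congr 1
        rw [Finset.sum_comm]
        exact Finset.sum_congr rfl fun i _ => (e3 i).symm

end StmtFourAux


/-- for every family of couplings `{π_A}` and strictly positive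
marginals `μ`, there is a rounded family `{π̂_A}` of nonnegative couplings whose
marginals match `μ` exactly, with
`Σ_A ‖π̂_A − π_A‖₁ ≤ L Σᵢ ‖Σ_{A∈S_K^L(i)} Pᵢ#π_A − μᵢ‖₁`, and such that `π̂_A` is
supported in the support of `π_A` except possibly on singleton sets `A`. -/
theorem stmt4 (K L : ℕ) (hK : 0 < K) (hL : 1 ≤ L) (hLK : L ≤ K)
    (𝒳 : Fin K → Type*) [∀ i, Fintype (𝒳 i)] [∀ i, DecidableEq (𝒳 i)]
    [∀ i, Nonempty (𝒳 i)]
    (π : (A : Finset (Fin K)) → ((j : A) → 𝒳 j.1) → ℝ)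
    (hπ : ∀ A x, 0 ≤ π A x)
    (μ : (i : Fin K) → 𝒳 i → ℝ) (hμpos : ∀ i xi, 0 < μ i xi) :
    ∃ πhat : (A : Finset (Fin K)) → ((j : A) → 𝒳 j.1) → ℝ,
      (∀ A x, 0 ≤ πhat A x) ∧
      (∀ (i : Fin K) (xi : 𝒳 i), totMarg 𝒳 L πhat i xi = μ i xi) ∧
      (∑ A ∈ SKL K L, l1 (fun x => πhat A x - π A x) ≤
        (L : ℝ) * ∑ i : Fin K,
          l1 (fun xi : 𝒳 i => totMarg 𝒳 L π i xi - μ i xi)) ∧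
      (∀ A ∈ SKL K L, A.card ≠ 1 → ∀ x, πhat A x ≠ 0 → π A x ≠ 0) := by
  classical
  refine ⟨phat 𝒳 L π μ, ?_, ?_, ?_, ?_⟩
  · -- nonnegativity
    intro A x
    unfold phat
    split_ifs with h
    · refine Finset.sum_nonneg fun j _ => ?_
      have := GG_le_mu 𝒳 L π μ hL hπ hμpos j.1 (x j)
      linarith
    · exact pit_nonneg 𝒳 L π μ hπ hμpos A x
  · -- exact marginals
    intro i xi
    rw [totMarg_split 𝒳 L hL (phat 𝒳 L π μ) i xi]
    have hsing : marg 𝒳 {i} (phat 𝒳 L π μ {i}) i xi = μ i xi - GG 𝒳 L π μ i xi := by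
      rw [marg_singleton]
      unfold phat
      rw [if_pos (Finset.card_singleton i),
        sum_coe_singleton i (fun j => μ j.1 (singFun 𝒳 i xi j)
          - GG 𝒳 L π μ j.1 (singFun 𝒳 i xi j))]
      rfl
    have hns : ∑ B ∈ nsSKLi L i, marg 𝒳 B (phat 𝒳 L π μ B) i xi
        = GG 𝒳 L π μ i xi := by
      rw [GG]
      refine Finset.sum_congr rfl fun B hB => ?_
      have hB1 : B.card ≠ 1 := ((Finset.mem_filter.mp hB).2).2
      have he : phat 𝒳 L π μ B = pit 𝒳 L π μ B := by
        funext y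
        unfold phat
        rw [if_neg hB1]
      rw [he]
    rw [hsing, hns]
    ring
  · -- the ℓ¹ bound
    rw [← Finset.sum_filter_add_sum_filter_not (SKL K L) (fun A => A.card = 1)
      (fun A => l1 (fun x => phat 𝒳 L π μ A x - π A x))]
    have hfilter_ne : (SKL K L).filter (fun A => ¬A.card = 1)
        = (SKL K L).filter (fun A => A.card ≠ 1) := by
      refine Finset.filter_congr fun A _ => by simp
    rw [hfilter_ne]
    -- singleton part
    have hsing_eq : ∑ A ∈ (SKL K L).filter (fun A => A.card = 1),
        l1 (fun x => phat 𝒳 L π μ A x - π A x)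
        = ∑ i : Fin K, ∑ xi : 𝒳 i,
            |μ i xi - GG 𝒳 L π μ i xi - marg 𝒳 {i} (π {i}) i xi| := by
      rw [SKL_filter_card_one L hL,
        Finset.sum_image (fun a _ b _ h => Finset.singleton_injective h)]
      refine Finset.sum_congr rfl fun i _ => ?_
      rw [l1_singleton_pi 𝒳 i (fun x => phat 𝒳 L π μ {i} x - π {i} x)]
      refine Finset.sum_congr rfl fun xi _ => ?_
      have h1 : phat 𝒳 L π μ {i} (singFun 𝒳 i xi) = μ i xi - GG 𝒳 L π μ i xi := by
        unfold phat
        rw [if_pos (Finset.card_singleton i),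
          sum_coe_singleton i (fun j => μ j.1 (singFun 𝒳 i xi j)
            - GG 𝒳 L π μ j.1 (singFun 𝒳 i xi j))]
        rfl
      have h2 : π {i} (singFun 𝒳 i xi) = marg 𝒳 {i} (π {i}) i xi :=
        (marg_singleton 𝒳 i (π {i}) xi).symm
      rw [h1, h2]
    rw [hsing_eq]
    -- nonsingleton part rewrite
    have hns_eq : ∑ A ∈ (SKL K L).filter (fun A => A.card ≠ 1),
        l1 (fun x => phat 𝒳 L π μ A x - π A x)
        = ∑ A ∈ (SKL K L).filter (fun A => A.card ≠ 1),
            ∑ x : (j : A) → 𝒳 j.1, (π A x - pit 𝒳 L π μ A x) := by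
      refine Finset.sum_congr rfl fun A hA => ?_
      have hA1 : A.card ≠ 1 := (Finset.mem_filter.mp hA).2
      simp only [l1]
      refine Finset.sum_congr rfl fun x _ => ?_
      have he : phat 𝒳 L π μ A x = pit 𝒳 L π μ A x := by
        unfold phat
        rw [if_neg hA1]
      rw [he, abs_of_nonpos (by linarith [pit_le 𝒳 L π μ hπ hμpos A x]), neg_sub]
    rw [hns_eq]
    -- pointwise singleton bound
    have hptw : ∀ (i : Fin K) (xi : 𝒳 i),
        |μ i xi - GG 𝒳 L π μ i xi - marg 𝒳 {i} (π {i}) i xi|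
          ≤ (max (μ i xi - totMarg 𝒳 L π i xi) 0
              + (1 - rf 𝒳 L π μ i xi) * marg 𝒳 {i} (π {i}) i xi)
            + (rf 𝒳 L π μ i xi * HH 𝒳 L π i xi - GG 𝒳 L π μ i xi) := by
      intro i xi
      have hm : totMarg 𝒳 L π i xi = marg 𝒳 {i} (π {i}) i xi + HH 𝒳 L π i xi := by
        rw [totMarg_split 𝒳 L hL π i xi, HH]
      have hcase : (totMarg 𝒳 L π i xi ≤ μ i xi ∧ rf 𝒳 L π μ i xi = 1)
          ∨ (rf 𝒳 L π μ i xi * totMarg 𝒳 L π i xi = μ i xi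
              ∧ μ i xi < totMarg 𝒳 L π i xi) := by
        unfold rf
        split_ifs with h
        · exact Or.inl ⟨h, rfl⟩
        · push_neg at h
          exact Or.inr ⟨div_mul_cancel₀ _ (by nlinarith [hμpos i xi]), h⟩
      have := aux_abs_term (μ i xi) (totMarg 𝒳 L π i xi) (marg 𝒳 {i} (π {i}) i xi)
        (HH 𝒳 L π i xi) (GG 𝒳 L π μ i xi) (rf 𝒳 L π μ i xi)
        (marg_nonneg 𝒳 {i} (π {i}) (hπ {i}) i xi) (HH_nonneg 𝒳 L π hπ i xi)
        hm (GG_le 𝒳 L π μ hπ hμpos i xi) (rf_le_one 𝒳 L π μ hμpos i xi) hcase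
      linarith
    -- claim B : removal + cross mass is controlled
    have hclaim : ∑ A ∈ (SKL K L).filter (fun A => A.card ≠ 1),
          (∑ x : (j : A) → 𝒳 j.1, (π A x - pit 𝒳 L π μ A x))
        + ∑ i : Fin K, ∑ xi : 𝒳 i,
            (rf 𝒳 L π μ i xi * HH 𝒳 L π i xi - GG 𝒳 L π μ i xi)
        ≤ (L : ℝ) * ∑ i : Fin K, ∑ xi : 𝒳 i,
            (1 - rf 𝒳 L π μ i xi) * HH 𝒳 L π i xi := by
      have ecross : ∑ i : Fin K, ∑ xi : 𝒳 i,
          (rf 𝒳 L π μ i xi * HH 𝒳 L π i xi - GG 𝒳 L π μ i xi)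
          = ∑ B ∈ (SKL K L).filter (fun B => B.card ≠ 1), ∑ i ∈ B,
              ((∑ xi : 𝒳 i, rf 𝒳 L π μ i xi * marg 𝒳 B (π B) i xi)
                - ∑ xi : 𝒳 i, marg 𝒳 B (pit 𝒳 L π μ B) i xi) := by
        rw [← sum_nsSKLi_comm L (fun i B =>
          (∑ xi : 𝒳 i, rf 𝒳 L π μ i xi * marg 𝒳 B (π B) i xi)
            - ∑ xi : 𝒳 i, marg 𝒳 B (pit 𝒳 L π μ B) i xi)]
        refine Finset.sum_congr rfl fun i _ => ?_
        calc ∑ xi : 𝒳 i, (rf 𝒳 L π μ i xi * HH 𝒳 L π i xi - GG 𝒳 L π μ i xi)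
            = ∑ xi : 𝒳 i, ((∑ B ∈ nsSKLi L i, rf 𝒳 L π μ i xi * marg 𝒳 B (π B) i xi)
                - ∑ B ∈ nsSKLi L i, marg 𝒳 B (pit 𝒳 L π μ B) i xi) := by
              refine Finset.sum_congr rfl fun xi _ => ?_
              rw [HH, GG, Finset.mul_sum]
          _ = ∑ B ∈ nsSKLi L i,
                ((∑ xi : 𝒳 i, rf 𝒳 L π μ i xi * marg 𝒳 B (π B) i xi)
                  - ∑ xi : 𝒳 i, marg 𝒳 B (pit 𝒳 L π μ B) i xi) := by
              rw [Finset.sum_sub_distrib, Finset.sum_sub_distrib]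
              congr 1
              · exact Finset.sum_comm
              · exact Finset.sum_comm
      have erhs : ∑ i : Fin K, ∑ xi : 𝒳 i, (1 - rf 𝒳 L π μ i xi) * HH 𝒳 L π i xi
          = ∑ B ∈ (SKL K L).filter (fun B => B.card ≠ 1), ∑ i ∈ B,
              ∑ xi : 𝒳 i, (1 - rf 𝒳 L π μ i xi) * marg 𝒳 B (π B) i xi := by
        rw [← sum_nsSKLi_comm L (fun i B =>
          ∑ xi : 𝒳 i, (1 - rf 𝒳 L π μ i xi) * marg 𝒳 B (π B) i xi)]
        refine Finset.sum_congr rfl fun i _ => ?_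
        calc ∑ xi : 𝒳 i, (1 - rf 𝒳 L π μ i xi) * HH 𝒳 L π i xi
            = ∑ xi : 𝒳 i, ∑ B ∈ nsSKLi L i,
                (1 - rf 𝒳 L π μ i xi) * marg 𝒳 B (π B) i xi := by
              refine Finset.sum_congr rfl fun xi _ => ?_
              rw [HH, Finset.mul_sum]
          _ = ∑ B ∈ nsSKLi L i, ∑ xi : 𝒳 i,
                (1 - rf 𝒳 L π μ i xi) * marg 𝒳 B (π B) i xi := Finset.sum_comm
      rw [ecross, erhs, ← Finset.sum_add_distrib, Finset.mul_sum]
      refine Finset.sum_le_sum fun B hB => ?_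
      have hBL : B.card ≤ L := by
        have := (Finset.mem_filter.mp hB).1
        simp only [SKL, Finset.mem_filter, Finset.mem_univ, true_and] at this
        exact this.2
      exact perB 𝒳 L π μ hπ hμpos B hBL
    -- final pointwise bound
    have hfin : ∀ (i : Fin K) (xi : 𝒳 i),
        (max (μ i xi - totMarg 𝒳 L π i xi) 0
            + (1 - rf 𝒳 L π μ i xi) * marg 𝒳 {i} (π {i}) i xi)
          + (L : ℝ) * ((1 - rf 𝒳 L π μ i xi) * HH 𝒳 L π i xi)
          ≤ (L : ℝ) * |totMarg 𝒳 L π i xi - μ i xi| := by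
      intro i xi
      have hm : totMarg 𝒳 L π i xi = marg 𝒳 {i} (π {i}) i xi + HH 𝒳 L π i xi := by
        rw [totMarg_split 𝒳 L hL π i xi, HH]
      have := aux_final_pt (L : ℝ) (μ i xi) (totMarg 𝒳 L π i xi)
        (marg 𝒳 {i} (π {i}) i xi) (HH 𝒳 L π i xi) (rf 𝒳 L π μ i xi)
        (marg_nonneg 𝒳 {i} (π {i}) (hπ {i}) i xi) (HH_nonneg 𝒳 L π hπ i xi)
        hm (rf_nonneg 𝒳 L π μ hμpos i xi) (rf_le_one 𝒳 L π μ hμpos i xi)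
        (one_sub_rf_mul 𝒳 L π μ hμpos i xi) (by exact_mod_cast hL)
      linarith
    -- assemble
    have step1 : ∑ i : Fin K, ∑ xi : 𝒳 i,
        |μ i xi - GG 𝒳 L π μ i xi - marg 𝒳 {i} (π {i}) i xi|
        ≤ (∑ i : Fin K, ∑ xi : 𝒳 i,
            (max (μ i xi - totMarg 𝒳 L π i xi) 0
              + (1 - rf 𝒳 L π μ i xi) * marg 𝒳 {i} (π {i}) i xi))
          + ∑ i : Fin K, ∑ xi : 𝒳 i,
              (rf 𝒳 L π μ i xi * HH 𝒳 L π i xi - GG 𝒳 L π μ i xi) := by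
      rw [← Finset.sum_add_distrib]
      refine Finset.sum_le_sum fun i _ => ?_
      rw [← Finset.sum_add_distrib]
      exact Finset.sum_le_sum fun xi _ => hptw i xi
    have step2 : (∑ i : Fin K, ∑ xi : 𝒳 i,
          (max (μ i xi - totMarg 𝒳 L π i xi) 0
            + (1 - rf 𝒳 L π μ i xi) * marg 𝒳 {i} (π {i}) i xi))
        + (L : ℝ) * ∑ i : Fin K, ∑ xi : 𝒳 i,
            (1 - rf 𝒳 L π μ i xi) * HH 𝒳 L π i xi
        ≤ (L : ℝ) * ∑ i : Fin K,
            l1 (fun xi : 𝒳 i => totMarg 𝒳 L π i xi - μ i xi) := by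
      have : (L : ℝ) * ∑ i : Fin K, l1 (fun xi : 𝒳 i => totMarg 𝒳 L π i xi - μ i xi)
          = ∑ i : Fin K, ∑ xi : 𝒳 i, (L : ℝ) * |totMarg 𝒳 L π i xi - μ i xi| := by
        rw [Finset.mul_sum]
        refine Finset.sum_congr rfl fun i _ => ?_
        rw [l1, Finset.mul_sum]
      rw [this, Finset.mul_sum, ← Finset.sum_add_distrib]
      refine Finset.sum_le_sum fun i _ => ?_
      rw [Finset.mul_sum, ← Finset.sum_add_distrib]
      exact Finset.sum_le_sum fun xi _ => hfin i xi
    linarith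
  · -- support condition
    intro A _ hcard x hne h0
    apply hne
    unfold phat
    rw [if_neg hcard]
    unfold pit
    rw [h0, zero_mul]

end
end

section
/- For every real s > 0 satisfying s − 1 − log s ≤ 1, it holds that s − 1 − log s ≥ (s − 1)²/5. -/
/-- For every real `s > 0` satisfying `s - 1 - log s ≤ 1`, it holds that
`s - 1 - log s ≥ (s - 1)² / 5`. -/
theorem stmt8 (s : ℝ) (hs : 0 < s) (h : s - 1 - Real.log s ≤ 1) :
    s - 1 - Real.log s ≥ (s - 1) ^ 2 / 5 := by
  rcases le_or_gt s (3/2) with h1 | h1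
  · -- small case: use log s ≤ 2(√s - 1)
    set v := Real.sqrt s with hv
    have hv0 : 0 ≤ v := Real.sqrt_nonneg s
    have hvs : v ^ 2 = s := Real.sq_sqrt hs.le
    have hlv : Real.log v ≤ v - 1 := Real.log_le_sub_one_of_pos (Real.sqrt_pos.mpr hs)
    have hls : Real.log s = 2 * Real.log v := by
      rw [hv, Real.log_sqrt hs.le]; ring
    have hub : Real.log s ≤ 2 * (v - 1) := by linarith
    have hv125 : v ≤ 5/4 := by nlinarith
    have h5 : (0:ℝ) ≤ 5 - (v + 1) ^ 2 := by nlinarith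
    nlinarith [mul_nonneg (sq_nonneg (v - 1)) h5]
  rcases le_or_gt s (29/10) with h2 | h2
  · -- middle case: tangent at 2
    have hl2u : Real.log 2 < 0.6931471808 := Real.log_two_lt_d9
    have hd : Real.log (s/2) ≤ s/2 - 1 := Real.log_le_sub_one_of_pos (by positivity)
    have hld : Real.log (s/2) = Real.log s - Real.log 2 := by
      rw [Real.log_div hs.ne' (by norm_num)]
    nlinarith [mul_nonneg (by linarith : (0:ℝ) ≤ s - 3/2) (by linarith : (0:ℝ) ≤ 29/10 - s)]
  · -- large case: tangent at e
    have hE1 : 2.7182818283 < Real.exp 1 := Real.exp_one_gt_d9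
    have hE2 : Real.exp 1 < 2.7182818286 := Real.exp_one_lt_d9
    have hEpos : (0:ℝ) < Real.exp 1 := by linarith
    have hd : Real.log (s / Real.exp 1) ≤ s / Real.exp 1 - 1 :=
      Real.log_le_sub_one_of_pos (by positivity)
    have hld : Real.log (s / Real.exp 1) = Real.log s - 1 := by
      rw [Real.log_div hs.ne' hEpos.ne', Real.log_exp]
    have hub : Real.log s ≤ s / Real.exp 1 := by linarith
    have key : (s - 2) * Real.exp 1 ≤ s := by
      have h3 : s - 2 ≤ s / Real.exp 1 := by linarith
      calc (s - 2) * Real.exp 1 ≤ (s / Real.exp 1) * Real.exp 1 :=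
            mul_le_mul_of_nonneg_right h3 hEpos.le
        _ = s := div_mul_cancel₀ s hEpos.ne'
    have hub2 : Real.log s * Real.exp 1 ≤ s := by
      calc Real.log s * Real.exp 1 ≤ (s / Real.exp 1) * Real.exp 1 :=
            mul_le_mul_of_nonneg_right hub hEpos.le
        _ = s := div_mul_cancel₀ s hEpos.ne'
    have hub3 : Real.log s * 2.7182818283 ≤ s := by
      nlinarith [Real.log_nonneg (by linarith : (1:ℝ) ≤ s)]
    have hsb : s ≤ 3.16396 := by
      nlinarith [mul_nonneg (by linarith : (0:ℝ) ≤ s - 2)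
        (by linarith : (0:ℝ) ≤ Real.exp 1 - 2.7182818283)]
    nlinarith [mul_nonneg (by linarith : (0:ℝ) ≤ s - 29/10)
      (by linarith : (0:ℝ) ≤ 3.16396 - s), hub3]
end
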